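/- arXiv:1504.03457 — 5 statements merged into one kernel-verified Lean document; each statement's English description precedes it below -/
import Mathlib

section
/- Let R0 > 0, T > 0, L0 > 0, δ > 0 and let f : ℝ × [R0,∞) → ℝ be continuous and T-periodic in its first variable, satisfying: there exist constants μ̌ ≤ μ̂ and a nonnegative integer N with (Nπ/T)² < μ̌, μ̂ < ((N+1)π/T)², and μ̌ ≤ liminf_{ρ→+∞} f(t,ρ)/ρ ≤ limsup_{ρ→+∞} f(t,ρ)/ρ ≤ μ̂ uniformly in t. Then there exists χ̄ > 0 such that for every χ ≥ χ̄ there exist R = R(χ) > 0 and a positive integer n₁ = n₁(χ) with the following property: every solution x of x'' + g_n(L,t,x) = 0 with n > n₁ and L ∈ [0,L0], satisfying (x(t0),x'(t0)) ∈ closure(B_χ) ∩ Π⁺ at some time t0 ∈ [0,T], satisfies (x(t),x'(t)) ∈ Ξ_R^{n₁} for every t ∈ [t0, t0+T]. -/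
open Real Filter Set

/-- `g(L,t,r) = −L²/(r+R0)³ + f(t, r+R0)`. -/
noncomputable def gFun (R0 : ℝ) (f : ℝ → ℝ → ℝ) (L t r : ℝ) : ℝ :=
  -(L ^ 2) / (r + R0) ^ 3 + f t (r + R0)

/-- The approximating nonlinearity `g_n`. -/
noncomputable def gApprox (R0 δ : ℝ) (f : ℝ → ℝ → ℝ) (n : ℕ) (L t x : ℝ) : ℝ :=
  if 1 / (n : ℝ) ≤ x then gFun R0 f L t x
  else if 0 < x then (n : ℝ) * x * (gFun R0 f L t x + δ) - δ
  else (n : ℝ) * x - δ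

/-- The right half-plane `Π⁺`. -/
def PiPlus : Set (ℝ × ℝ) := {q | 0 ≤ q.1}

/-- The left half-plane `Π⁻`. -/
def PiMinus : Set (ℝ × ℝ) := {q | q.1 ≤ 0}

/-- The open ball `B_s` of radius `s` centered at the origin. -/
def Bball (s : ℝ) : Set (ℝ × ℝ) := {q | q.1 ^ 2 + q.2 ^ 2 < s ^ 2}

/-- The open region `Σ_c^n` delimited by the ellipse `y² + nx² − 2δx = c²`. -/
def SigmaSet (δ : ℝ) (n : ℕ) (c : ℝ) : Set (ℝ × ℝ) :=
  {q | q.2 ^ 2 + (n : ℝ) * q.1 ^ 2 - 2 * δ * q.1 < c ^ 2}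

/-- `Ξ_c^n = (Π⁻ ∩ Σ_c^n) ∪ (Π⁺ ∩ B_c)`. -/
def XiSet (δ : ℝ) (n : ℕ) (c : ℝ) : Set (ℝ × ℝ) :=
  (PiMinus ∩ SigmaSet δ n c) ∪ (PiPlus ∩ Bball c)

noncomputable def phiAux (n : ℕ) (u : ℝ) : ℝ := if u ≤ 0 then (n : ℝ) * u ^ 2 else u ^ 2
noncomputable def phiDAux (n : ℕ) (u : ℝ) : ℝ := if u ≤ 0 then 2 * (n : ℝ) * u else 2 * u

lemma phiAux_nonneg (n : ℕ) (u : ℝ) : 0 ≤ phiAux n u := by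
  unfold phiAux; split_ifs <;> positivity

lemma phiAux_of_nonneg (n : ℕ) {u : ℝ} (hu : 0 ≤ u) : phiAux n u = u ^ 2 := by
  unfold phiAux; split_ifs with h
  · have : u = 0 := le_antisymm h hu
    simp [this]
  · rfl

lemma phiAux_hasDerivAt (n : ℕ) (u : ℝ) : HasDerivAt (phiAux n) (phiDAux n u) u := by
  rcases lt_trichotomy u 0 with h | h | h
  · have heq : phiAux n =ᶠ[nhds u] (fun v => (n:ℝ) * v ^ 2) := by
      filter_upwards [Iio_mem_nhds h] with v hv
      simp [phiAux, (mem_Iio.mp hv).le]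
    have h2 : HasDerivAt (fun v : ℝ => (n:ℝ) * v ^ 2) ((n:ℝ) * (2 * u ^ 1)) u :=
      (hasDerivAt_pow 2 u).const_mul (n:ℝ)
    have h3 := h2.congr_of_eventuallyEq heq
    have : phiDAux n u = (n:ℝ) * (2 * u ^ 1) := by
      simp [phiDAux, le_of_lt h]; ring
    rw [this]; exact h3
  · subst h
    have hD : phiDAux n 0 = 0 := by simp [phiDAux]
    rw [hD, hasDerivAt_iff_isLittleO]
    have hsq : (fun v : ℝ => v ^ 2) =o[nhds (0:ℝ)] fun v => v - 0 := by
      have := hasDerivAt_iff_isLittleO.mp (hasDerivAt_pow 2 (0:ℝ))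
      simpa using this
    have hbig : (fun v : ℝ => phiAux n v - phiAux n 0 - (v - 0) • (0:ℝ)) =O[nhds (0:ℝ)] fun v : ℝ => v ^ 2 := by
      rw [Asymptotics.isBigO_iff]
      refine ⟨(n:ℝ) + 1, Eventually.of_forall fun v => ?_⟩
      have h0 : phiAux n 0 = 0 := by simp [phiAux]
      rw [h0]
      simp only [smul_zero, sub_zero]
      rw [Real.norm_eq_abs, Real.norm_eq_abs]
      have hv2 : |v ^ 2| = v ^ 2 := abs_of_nonneg (sq_nonneg v)
      rw [hv2]
      unfold phiAux
      split_ifs with hv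
      · rw [abs_of_nonneg (by positivity)]
        nlinarith [sq_nonneg v]
      · rw [abs_of_nonneg (sq_nonneg v)]
        nlinarith [sq_nonneg v, Nat.cast_nonneg (α := ℝ) n]
    exact hbig.trans_isLittleO hsq
  · have heq : phiAux n =ᶠ[nhds u] (fun v => v ^ 2) := by
      filter_upwards [Ioi_mem_nhds h] with v hv
      simp [phiAux, not_le.2 (mem_Ioi.mp hv)]
    have h2 : HasDerivAt (fun v : ℝ => v ^ 2) (2 * u ^ 1) u := hasDerivAt_pow 2 u
    have h3 := h2.congr_of_eventuallyEq heq
    have : phiDAux n u = 2 * u ^ 1 := by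
      simp [phiDAux, not_le.2 h]
    rw [this]; exact h3

lemma antitone_of_hasDerivWithinAt {a b : ℝ} {U U' : ℝ → ℝ}
    (hU : ∀ t ∈ Icc a b, HasDerivWithinAt U (U' t) (Icc a b) t)
    (hle : ∀ t ∈ Icc a b, U' t ≤ 0) : AntitoneOn U (Icc a b) := by
  apply antitoneOn_of_deriv_nonpos (convex_Icc a b)
  · exact fun t ht => (hU t ht).continuousWithinAt
  · intro t ht
    rw [interior_Icc] at ht
    exact (((hU t (Ioo_subset_Icc_self ht)).hasDerivAt
      (Icc_mem_nhds ht.1 ht.2)).differentiableAt).differentiableWithinAt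
  · intro t ht
    rw [interior_Icc] at ht
    have hda := (hU t (Ioo_subset_Icc_self ht)).hasDerivAt (Icc_mem_nhds ht.1 ht.2)
    rw [hda.deriv]
    exact hle t (Ioo_subset_Icc_self ht)

set_option maxHeartbeats 1000000 in
theorem statement5
    (R0 T L0 δ : ℝ) (hR0 : 0 < R0) (hT : 0 < T) (hL0 : 0 < L0) (hδ : 0 < δ)
    (f : ℝ → ℝ → ℝ)
    (hf_cont : ContinuousOn (fun q : ℝ × ℝ => f q.1 q.2) (univ ×ˢ Ici R0))
    (hf_per : ∀ t ρ, f (t + T) ρ = f t ρ)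
    (μlo μhi : ℝ) (N : ℕ) (hμ : μlo ≤ μhi)
    (h1 : ((N : ℝ) * π / T) ^ 2 < μlo)
    (h2 : μhi < (((N : ℝ) + 1) * π / T) ^ 2)
    (hlo : ∀ ε > (0 : ℝ), ∃ M : ℝ, R0 ≤ M ∧ ∀ t ρ : ℝ, M ≤ ρ → μlo - ε < f t ρ / ρ)
    (hhi : ∀ ε > (0 : ℝ), ∃ M : ℝ, R0 ≤ M ∧ ∀ t ρ : ℝ, M ≤ ρ → f t ρ / ρ < μhi + ε) :
    ∃ χbar : ℝ, 0 < χbar ∧ ∀ χ : ℝ, χbar ≤ χ →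
      ∃ R : ℝ, 0 < R ∧ ∃ n₁ : ℕ, 0 < n₁ ∧
        ∀ n : ℕ, n₁ < n → ∀ L ∈ Icc (0 : ℝ) L0, ∀ x x' : ℝ → ℝ, ∀ t0 ∈ Icc (0 : ℝ) T,
          (∀ t ∈ Icc t0 (t0 + T),
            HasDerivWithinAt x (x' t) (Icc t0 (t0 + T)) t ∧
            HasDerivWithinAt x' (-(gApprox R0 δ f n L t (x t))) (Icc t0 (t0 + T)) t) →
          (x t0, x' t0) ∈ closure (Bball χ) ∩ PiPlus →
          ∀ t ∈ Icc t0 (t0 + T), (x t, x' t) ∈ XiSet δ n₁ R := by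
  -- Step 1: constants
  obtain ⟨M1, hM1R, hM1⟩ := hhi 1 one_pos
  obtain ⟨M2, hM2R, hM2⟩ := hlo 1 one_pos
  set M : ℝ := max M1 M2 with hMdef
  obtain ⟨C1, hC1⟩ := (IsCompact.prod isCompact_Icc isCompact_Icc :
      IsCompact ((Icc (0:ℝ) T) ×ˢ (Icc R0 M))).exists_bound_of_continuousOn
    (hf_cont.mono (by rintro ⟨t, ρ⟩ ⟨ht, hρ⟩; exact ⟨trivial, hρ.1⟩))
  set C0 : ℝ := max C1 0 with hC0def
  have hC0 : 0 ≤ C0 := le_max_right _ _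
  have hbound : ∀ t ρ : ℝ, ρ ∈ Icc R0 M → |f t ρ| ≤ C0 := by
    intro t ρ hρ
    have hper : Function.Periodic (fun s => f s ρ) T := fun s => hf_per s ρ
    have heq : f t ρ = f (t - (⌊t / T⌋ : ℤ) * T) ρ := (hper.sub_int_mul_eq ⌊t / T⌋).symm
    have h2' : 0 ≤ t - (⌊t / T⌋ : ℤ) * T := Int.sub_floor_div_mul_nonneg t hT
    have h3' : t - (⌊t / T⌋ : ℤ) * T < T := Int.sub_floor_div_mul_lt t hT
    have h4 := hC1 (t - (⌊t / T⌋ : ℤ) * T, ρ) ⟨⟨h2', le_of_lt h3'⟩, hρ⟩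
    rw [Real.norm_eq_abs] at h4
    rw [heq]
    exact le_trans h4 (le_max_left _ _)
  set B : ℝ := max |μhi + 1| |μlo - 1| with hBdef
  have hB0 : 0 ≤ B := le_trans (abs_nonneg _) (le_max_left _ _)
  have hflin : ∀ t ρ : ℝ, R0 ≤ ρ → |f t ρ| ≤ C0 + B * ρ := by
    intro t ρ hρ
    have hρ0 : 0 < ρ := lt_of_lt_of_le hR0 hρ
    rcases le_total ρ M with h | h
    · have h4 := hbound t ρ ⟨hρ, h⟩
      have h5 : 0 ≤ B * ρ := mul_nonneg hB0 hρ0.le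
      linarith
    · have hu := hM1 t ρ (le_trans (le_max_left _ _) h)
      have hl := hM2 t ρ (le_trans (le_max_right _ _) h)
      rw [div_lt_iff₀ hρ0] at hu
      rw [lt_div_iff₀ hρ0] at hl
      have hB1 : μhi + 1 ≤ B := le_trans (le_abs_self _) (le_max_left _ _)
      have hB2 : -B ≤ μlo - 1 := by
        have ha := neg_abs_le (μlo - 1)
        have hb : |μlo - 1| ≤ B := le_max_right _ _
        linarith
      rw [abs_le]
      constructor
      · linarith [mul_le_mul_of_nonneg_right hB2 hρ0.le]
      · linarith [mul_le_mul_of_nonneg_right hB1 hρ0.le]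
  set A0 : ℝ := L0 ^ 2 / R0 ^ 3 + C0 + B * R0 with hA0def
  have hA00 : 0 ≤ A0 := by
    have : 0 ≤ L0 ^ 2 / R0 ^ 3 := by positivity
    have : 0 ≤ B * R0 := mul_nonneg hB0 hR0.le
    rw [hA0def]; positivity
  have hgF : ∀ L t u : ℝ, 0 ≤ L → L ≤ L0 → 0 ≤ u → |gFun R0 f L t u| ≤ A0 + B * u := by
    intro L t u hLl hLr hu
    have hden : (0:ℝ) < (u + R0) ^ 3 := by positivity
    have ha : |(-(L ^ 2) / (u + R0) ^ 3)| ≤ L0 ^ 2 / R0 ^ 3 := by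
      rw [neg_div, abs_neg, abs_of_nonneg (by positivity)]
      exact div_le_div₀ (by positivity) (by nlinarith) (by positivity)
        (pow_le_pow_left₀ hR0.le (by linarith) 3)
    have hb : |f t (u + R0)| ≤ C0 + B * (u + R0) := hflin t (u + R0) (by linarith)
    have hc : |gFun R0 f L t u| ≤ |(-(L ^ 2) / (u + R0) ^ 3)| + |f t (u + R0)| := by
      rw [gFun]; exact abs_add_le _ _
    rw [hA0def]
    linarith [ha, hb, hc]
  set A : ℝ := A0 + 2 * δ with hAdef
  have hApos : 0 < A := by rw [hAdef]; linarith
  have hgapp : ∀ (n : ℕ), 1 ≤ n → ∀ L t u : ℝ, 0 ≤ L → L ≤ L0 → 0 ≤ u →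
      |gApprox R0 δ f n L t u| ≤ A + B * u := by
    intro n hn L t u hLl hLr hu
    have hn0 : (0:ℝ) < n := by exact_mod_cast hn
    rw [gApprox]
    split_ifs with hc1 hc2
    · have := hgF L t u hLl hLr hu
      rw [hAdef]; linarith
    · have hnu : (n:ℝ) * u ≤ 1 := by
        rw [not_le] at hc1
        rw [lt_div_iff₀ hn0] at hc1
        linarith
      have hnu0 : 0 ≤ (n:ℝ) * u := by positivity
      have hg := hgF L t u hLl hLr hu
      have habs : |(n:ℝ) * u * (gFun R0 f L t u + δ) - δ| ≤
          (n:ℝ) * u * |gFun R0 f L t u + δ| + δ := by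
        rw [sub_eq_add_neg]
        refine le_trans (abs_add_le _ _) ?_
        rw [abs_neg, abs_of_pos hδ, abs_mul, abs_of_nonneg hnu0]
      have h5 : |gFun R0 f L t u + δ| ≤ A0 + B * u + δ := by
        have h6 := abs_add_le (gFun R0 f L t u) δ
        rw [abs_of_pos hδ] at h6
        linarith
      have h6 : (n:ℝ) * u * |gFun R0 f L t u + δ| ≤ 1 * (A0 + B * u + δ) :=
        mul_le_mul hnu h5 (abs_nonneg _) zero_le_one
      rw [hAdef]
      linarith [habs, h6]
    · have hu0 : u = 0 := le_antisymm (not_lt.1 hc2) hu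
      rw [hu0]
      simp only [mul_zero, zero_sub, abs_neg]
      rw [abs_of_pos hδ, hAdef]
      linarith
  set C : ℝ := 2 + (B + 1) ^ 2 + δ with hCdef
  set K : ℝ := A ^ 2 + δ with hKdef
  have hC : 0 < C := by rw [hCdef]; positivity
  have hK : 0 < K := by rw [hKdef]; positivity
  have hCδ : δ ≤ C := by rw [hCdef]; nlinarith [sq_nonneg (B + 1)]
  have hKδ : δ ≤ K := by rw [hKdef]; nlinarith [sq_nonneg A]
  -- Step 2: choose χbar, R, n₁
  refine ⟨1, one_pos, fun χ hχ => ?_⟩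
  have hχ0 : (0:ℝ) < χ := lt_of_lt_of_le one_pos hχ
  set MV : ℝ := (χ ^ 2 + K / C) * Real.exp (C * T) with hMVdef
  have hMV : 0 < MV := by
    rw [hMVdef]
    have h0 : 0 < χ ^ 2 + K / C := by positivity
    exact mul_pos h0 (Real.exp_pos _)
  have hsMV : 0 ≤ Real.sqrt MV := Real.sqrt_nonneg _
  set R : ℝ := Real.sqrt (MV + 2 * δ * Real.sqrt MV + 1) with hRdef
  have hargR : 0 ≤ MV + 2 * δ * Real.sqrt MV + 1 := by positivity
  have hR2 : R ^ 2 = MV + 2 * δ * Real.sqrt MV + 1 := Real.sq_sqrt hargR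
  have hRpos : 0 < R := Real.sqrt_pos.2 (by positivity)
  refine ⟨R, hRpos, 1, one_pos, ?_⟩
  intro n hn L hL x x' t0 ht0 hsol hinit t ht
  have hn1 : (1:ℝ) ≤ (n:ℝ) := by exact_mod_cast Nat.one_le_of_lt hn
  have hnpos : (0:ℝ) < (n:ℝ) := lt_of_lt_of_le one_pos hn1
  set s : Set ℝ := Icc t0 (t0 + T) with hsdef
  -- derivative of V
  have hVderiv : ∀ τ ∈ s, HasDerivWithinAt (fun σ => (x' σ) ^ 2 + phiAux n (x σ))
      (2 * x' τ * (-(gApprox R0 δ f n L τ (x τ))) + phiDAux n (x τ) * x' τ) s τ := by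
    intro τ hτ
    obtain ⟨hx, hx'⟩ := hsol τ hτ
    have hp : HasDerivWithinAt (fun σ => (x' σ) ^ 2)
        (2 * x' τ * (-(gApprox R0 δ f n L τ (x τ)))) s τ := by
      have := hx'.pow 2
      norm_num at this
      rw [show 2 * x' τ * (-(gApprox R0 δ f n L τ (x τ))) = -(2 * x' τ * gApprox R0 δ f n L τ (x τ)) by ring]
      exact this
    have hq : HasDerivWithinAt (fun σ => phiAux n (x σ)) (phiDAux n (x τ) * x' τ) s τ :=
      (phiAux_hasDerivAt n (x τ)).comp_hasDerivWithinAt τ hx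
    exact hp.add hq
  -- pointwise differential inequality
  have hVineq : ∀ τ : ℝ, 2 * x' τ * (-(gApprox R0 δ f n L τ (x τ))) + phiDAux n (x τ) * x' τ
      ≤ C * ((x' τ) ^ 2 + phiAux n (x τ)) + K := by
    intro τ
    set u := x τ with hudef
    set v := x' τ with hvdef
    have hphinn : 0 ≤ phiAux n u := phiAux_nonneg n u
    rcases le_or_gt u 0 with hu | hu
    · have hg : gApprox R0 δ f n L τ u = (n:ℝ) * u - δ := by
        rw [gApprox, if_neg, if_neg (not_lt.2 hu)]
        push_neg
        exact lt_of_le_of_lt hu (by positivity)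
      have hphiD : phiDAux n u = 2 * (n:ℝ) * u := if_pos hu
      have hphi : phiAux n u = (n:ℝ) * u ^ 2 := if_pos hu
      rw [hg, hphiD, hphi]
      linarith [mul_nonneg hδ.le (sq_nonneg (v - 1)),
        mul_nonneg (sub_nonneg.2 hCδ) (sq_nonneg v),
        mul_nonneg hC.le (mul_nonneg hnpos.le (sq_nonneg u)), hKδ]
    · have hphiD : phiDAux n u = 2 * u := if_neg (not_le.2 hu)
      have hphi : phiAux n u = u ^ 2 := if_neg (not_le.2 hu)
      have hg := hgapp n (by omega) L τ u hL.1 hL.2 hu.le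
      rw [abs_le] at hg
      rw [hphiD, hphi, hCdef, hKdef]
      rcases le_or_gt 0 v with hv | hv
      · linarith [mul_nonneg hv (show (0:ℝ) ≤ gApprox R0 δ f n L τ u + (A + B * u) by linarith [hg.1]),
          sq_nonneg (v - A), sq_nonneg (v - (B + 1) * u),
          sq_nonneg (B * v), mul_nonneg hB0 (sq_nonneg v),
          sq_nonneg v, sq_nonneg u,
          mul_nonneg hδ.le (sq_nonneg v), mul_nonneg hδ.le (sq_nonneg u)]
      · linarith [mul_nonneg (neg_nonneg.2 hv.le) (show (0:ℝ) ≤ (A + B * u) - gApprox R0 δ f n L τ u by linarith [hg.2]),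
          sq_nonneg (v + A), sq_nonneg (v + (B + 1) * u),
          sq_nonneg (B * v), mul_nonneg hB0 (sq_nonneg v),
          sq_nonneg v, sq_nonneg u,
          mul_nonneg (neg_nonneg.2 hv.le) hu.le,
          mul_nonneg hδ.le (sq_nonneg v), mul_nonneg hδ.le (sq_nonneg u)]
  -- U and its monotonicity
  set U : ℝ → ℝ := fun τ => (((x' τ) ^ 2 + phiAux n (x τ)) + K / C) * Real.exp (-(C * τ)) with hUdef
  have hanti : AntitoneOn U s := by
    refine antitone_of_hasDerivWithinAt
      (U' := fun τ => (2 * x' τ * (-(gApprox R0 δ f n L τ (x τ))) + phiDAux n (x τ) * x' τ) * Real.exp (-(C * τ))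
        + (((x' τ) ^ 2 + phiAux n (x τ)) + K / C) * (Real.exp (-(C * τ)) * (-C))) ?_ ?_
    · intro τ hτ
      have hexp : HasDerivAt (fun σ : ℝ => Real.exp (-(C * σ))) (Real.exp (-(C * τ)) * (-C)) τ := by
        have hin : HasDerivAt (fun σ : ℝ => -(C * σ)) (-C) τ := by
          have := ((hasDerivAt_id τ).const_mul C).neg
          simp only [mul_one] at this
          exact this
        exact (Real.hasDerivAt_exp (-(C * τ))).comp τ hin
      exact ((hVderiv τ hτ).add_const (K / C)).mul hexp.hasDerivWithinAt
    · intro τ hτ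
      have h := hVineq τ
      have he := Real.exp_pos (-(C * τ))
      have hKC : K / C * C = K := div_mul_cancel₀ K (ne_of_gt hC)
      have h1 := mul_le_mul_of_nonneg_right h he.le
      have h2 : (((x' τ) ^ 2 + phiAux n (x τ)) + K / C) * (Real.exp (-(C * τ)) * (-C))
          = -(C * ((x' τ) ^ 2 + phiAux n (x τ)) * Real.exp (-(C * τ))) - K / C * C * Real.exp (-(C * τ)) := by
        ring
      rw [hKC] at h2
      beta_reduce
      rw [h2]
      linarith [h1]
  have ht0s : t0 ∈ s := ⟨le_refl t0, by linarith [hT]⟩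
  have hUt : U t ≤ U t0 := hanti ht0s ht ht.1
  -- initial bound
  have hx0 : 0 ≤ x t0 := hinit.2
  have hcl : (x t0) ^ 2 + (x' t0) ^ 2 ≤ χ ^ 2 := by
    have hsub : closure (Bball χ) ⊆ {q : ℝ × ℝ | q.1 ^ 2 + q.2 ^ 2 ≤ χ ^ 2} := by
      apply closure_minimal
      · intro q hq
        have hq' : q.1 ^ 2 + q.2 ^ 2 < χ ^ 2 := hq
        exact hq'.le
      · exact isClosed_le ((continuous_fst.pow 2).add (continuous_snd.pow 2)) continuous_const
    exact hsub hinit.1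
  have hVt0 : (x' t0) ^ 2 + phiAux n (x t0) ≤ χ ^ 2 := by
    rw [phiAux_of_nonneg n hx0]; linarith
  -- Gronwall conclusion
  have hVt : (x' t) ^ 2 + phiAux n (x t) ≤ MV := by
    have e1 : (0:ℝ) < Real.exp (C * t) := Real.exp_pos _
    have hmul := mul_le_mul_of_nonneg_right hUt e1.le
    have lhs_eq : U t * Real.exp (C * t) = ((x' t) ^ 2 + phiAux n (x t)) + K / C := by
      rw [hUdef]
      simp only []
      rw [mul_assoc, ← Real.exp_add, neg_add_cancel, Real.exp_zero, mul_one]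
    have rhs_eq : U t0 * Real.exp (C * t) =
        (((x' t0) ^ 2 + phiAux n (x t0)) + K / C) * Real.exp (C * (t - t0)) := by
      rw [hUdef]
      simp only []
      rw [mul_assoc, ← Real.exp_add]
      congr 1
      ring_nf
    rw [lhs_eq, rhs_eq] at hmul
    have hexple : Real.exp (C * (t - t0)) ≤ Real.exp (C * T) := by
      apply Real.exp_le_exp.2
      have h7 : t - t0 ≤ T := by linarith [ht.2]
      linarith [mul_le_mul_of_nonneg_left h7 hC.le]
    have hstep2 : (((x' t0) ^ 2 + phiAux n (x t0)) + K / C) * Real.exp (C * (t - t0))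
        ≤ (χ ^ 2 + K / C) * Real.exp (C * T) := by
      have hVt0' : ((x' t0) ^ 2 + phiAux n (x t0)) + K / C ≤ χ ^ 2 + K / C := by linarith
      calc (((x' t0) ^ 2 + phiAux n (x t0)) + K / C) * Real.exp (C * (t - t0))
          ≤ (χ ^ 2 + K / C) * Real.exp (C * (t - t0)) :=
            mul_le_mul_of_nonneg_right hVt0' (Real.exp_pos _).le
        _ ≤ (χ ^ 2 + K / C) * Real.exp (C * T) :=
            mul_le_mul_of_nonneg_left hexple (by positivity)
    have hKC : 0 < K / C := by positivity
    rw [hMVdef]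
    linarith
  -- final membership
  have hu2 : (x t) ^ 2 ≤ MV := by
    rcases le_or_gt (x t) 0 with h | h
    · have hphi : phiAux n (x t) = (n:ℝ) * (x t) ^ 2 := if_pos h
      linarith [sq_nonneg (x' t), mul_le_mul_of_nonneg_right hn1 (sq_nonneg (x t))]
    · have hphi : phiAux n (x t) = (x t) ^ 2 := if_neg (not_le.2 h)
      linarith [sq_nonneg (x' t)]
  have hv2 : (x' t) ^ 2 ≤ MV := by linarith [phiAux_nonneg n (x t)]
  have habs : |x t| ≤ Real.sqrt MV := by
    rw [← Real.sqrt_sq_eq_abs]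
    exact Real.sqrt_le_sqrt hu2
  rcases le_or_gt (x t) 0 with hxt | hxt
  · left
    refine ⟨hxt, ?_⟩
    show (x' t) ^ 2 + ((1:ℕ):ℝ) * (x t) ^ 2 - 2 * δ * (x t) < R ^ 2
    rw [hR2]
    have hn2 : -(x t) ≤ Real.sqrt MV := le_trans (neg_le_abs _) habs
    have hd1 : -(2 * δ * (x t)) ≤ 2 * δ * Real.sqrt MV := by
      linarith [mul_le_mul_of_nonneg_left hn2 (show (0:ℝ) ≤ 2 * δ by linarith)]
    have hsum : (x' t) ^ 2 + (x t) ^ 2 ≤ MV := by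
      have hphi : phiAux n (x t) = (n:ℝ) * (x t) ^ 2 := if_pos hxt
      linarith [mul_le_mul_of_nonneg_right hn1 (sq_nonneg (x t))]
    push_cast
    linarith [hd1, hsum]
  · right
    refine ⟨le_of_lt hxt, ?_⟩
    show (x t) ^ 2 + (x' t) ^ 2 < R ^ 2
    rw [hR2]
    have hphi : phiAux n (x t) = (x t) ^ 2 := if_neg (not_le.2 hxt)
    linarith [mul_nonneg (mul_nonneg (by linarith : (0:ℝ) ≤ 2) hδ.le) hsMV]
end

section
/- Let T > 0 and let h : ℝ × [0,∞) → ℝ be continuous and T-periodic in its first variable. Assume there exist constants 0 < μ̌ ≤ μ̂ such that μ̌ ≤ liminf_{x→+∞} h(t,x)/x and limsup_{x→+∞} h(t,x)/x ≤ μ̂, uniformly in t ∈ [0,T]. Then for every ε > 0 there exists χ_ε > 0 with the following property: if x is a solution of x'' + h(t,x) = 0 on an interval [t₂,t₃] with x(t₂) = x(t₃) = 0, x(t) > 0 for all t ∈ (t₂,t₃), and x(t)² + x'(t)² > χ_ε² for all t ∈ [t₂,t₃], then π/√μ̂ − ε < t₃ − t₂ < π/√μ̌ + ε. -/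
open Real Set
open Filter Topology

lemma my_arctan_le_self {z : ℝ} (hz : 0 ≤ z) : Real.arctan z ≤ z := by
  have h1 : 0 ≤ Real.arctan z := by
    rw [← Real.arctan_zero]; exact Real.arctan_strictMono.monotone hz
  have h2 : Real.arctan z < π / 2 := Real.arctan_lt_pi_div_two z
  calc Real.arctan z ≤ Real.tan (Real.arctan z) := Real.le_tan h1 h2
    _ = z := Real.tan_arctan z

lemma my_theta_deriv (x x' : ℝ → ℝ) (A c t : ℝ) (hc : 0 < c) (hx : 0 < x t)
    (H : HasDerivAt x (x' t) t) (H' : HasDerivAt x' A t) :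
    HasDerivAt (fun s => Real.arctan (x' s / (c * x s)))
      (c * (A * x t - (x' t)^2) / (c^2 * (x t)^2 + (x' t)^2)) t := by
  have hc0 : c * x t ≠ 0 := by positivity
  have hw : HasDerivAt (fun s => x' s / (c * x s))
      ((A * (c * x t) - x' t * (c * x' t)) / (c * x t)^2) t :=
    H'.div (H.const_mul c) hc0
  have hcomp := (Real.hasDerivAt_arctan (x' t / (c * x t))).comp t hw
  refine HasDerivAt.congr_deriv hcomp ?_
  have hd : (0:ℝ) < c^2 * (x t)^2 + (x' t)^2 := by positivity
  have h1 : (0:ℝ) < 1 + (x' t / (c * x t))^2 := by positivity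
  field_simp

lemma my_slope_lt_witness {f : ℝ → ℝ} {f' a r : ℝ} {s u : Set ℝ} (hu : u ⊆ s \ {a})
    (hne : (𝓝[u] a).NeBot) (hf : HasDerivWithinAt f f' s a) (hr : f' < r) :
    ∃ t ∈ u, (f t - f a) / (t - a) < r := by
  have h1 : Tendsto (slope f a) (𝓝[u] a) (𝓝 f') :=
    (hasDerivWithinAt_iff_tendsto_slope.1 hf).mono_left (nhdsWithin_mono a hu)
  have h2 : ∀ᶠ t in 𝓝[u] a, slope f a t < r := h1.eventually_lt_const hr
  obtain ⟨t, htu, ht⟩ := (h2.and eventually_mem_nhdsWithin).exists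
  exact ⟨t, ht, by rwa [slope_def_field] at htu⟩

lemma my_slope_gt_witness {f : ℝ → ℝ} {f' a r : ℝ} {s u : Set ℝ} (hu : u ⊆ s \ {a})
    (hne : (𝓝[u] a).NeBot) (hf : HasDerivWithinAt f f' s a) (hr : r < f') :
    ∃ t ∈ u, r < (f t - f a) / (t - a) := by
  have h1 : Tendsto (slope f a) (𝓝[u] a) (𝓝 f') :=
    (hasDerivWithinAt_iff_tendsto_slope.1 hf).mono_left (nhdsWithin_mono a hu)
  have h2 : ∀ᶠ t in 𝓝[u] a, r < slope f a t := h1.eventually_const_lt hr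
  obtain ⟨t, htu, ht⟩ := (h2.and eventually_mem_nhdsWithin).exists
  exact ⟨t, ht, by rwa [slope_def_field] at htu⟩

lemma my_nebot_left {a b : ℝ} (hab : a < b) : (𝓝[Ioo a b] a).NeBot := by
  apply mem_closure_iff_nhdsWithin_neBot.1
  rw [closure_Ioo hab.ne]
  exact ⟨le_rfl, hab.le⟩

lemma my_nebot_right {a b : ℝ} (hab : a < b) : (𝓝[Ioo a b] b).NeBot := by
  apply mem_closure_iff_nhdsWithin_neBot.1
  rw [closure_Ioo hab.ne]
  exact ⟨hab.le, le_rfl⟩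

set_option maxHeartbeats 1000000 in
theorem statement9
    (T : ℝ) (hT : 0 < T)
    (h : ℝ → ℝ → ℝ)
    (hh_cont : ContinuousOn (fun q : ℝ × ℝ => h q.1 q.2) (univ ×ˢ Ici (0 : ℝ)))
    (hh_per : ∀ t x, h (t + T) x = h t x)
    (μlo μhi : ℝ) (hμ0 : 0 < μlo) (hμ : μlo ≤ μhi)
    (hlo : ∀ ε > (0 : ℝ), ∃ M : ℝ, 0 < M ∧ ∀ t ∈ Icc (0 : ℝ) T, ∀ x : ℝ, M ≤ x →
      μlo - ε < h t x / x)
    (hhi : ∀ ε > (0 : ℝ), ∃ M : ℝ, 0 < M ∧ ∀ t ∈ Icc (0 : ℝ) T, ∀ x : ℝ, M ≤ x →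
      h t x / x < μhi + ε) :
    ∀ ε > (0 : ℝ), ∃ χ : ℝ, 0 < χ ∧
      ∀ x x' : ℝ → ℝ, ∀ t₂ t₃ : ℝ, t₂ < t₃ →
        (∀ t ∈ Icc t₂ t₃,
          HasDerivWithinAt x (x' t) (Icc t₂ t₃) t ∧
          HasDerivWithinAt x' (-(h t (x t))) (Icc t₂ t₃) t) →
        x t₂ = 0 → x t₃ = 0 →
        (∀ t ∈ Ioo t₂ t₃, 0 < x t) →
        (∀ t ∈ Icc t₂ t₃, χ ^ 2 < (x t) ^ 2 + (x' t) ^ 2) →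
        π / Real.sqrt μhi - ε < t₃ - t₂ ∧ t₃ - t₂ < π / Real.sqrt μlo + ε := by
  intro ε hε
  -- continuity of s ↦ π / √s
  have hμhi0 : 0 < μhi := lt_of_lt_of_le hμ0 hμ
  have hfc : ∀ s : ℝ, 0 < s → ContinuousAt (fun s : ℝ => π / Real.sqrt s) s := by
    intro s hs
    exact continuousAt_const.div Real.continuous_sqrt.continuousAt
      (ne_of_gt (Real.sqrt_pos.mpr hs))
  obtain ⟨δ₁, hδ₁, hδ₁'⟩ := Metric.continuousAt_iff.mp (hfc μlo hμ0) (ε/2) (half_pos hε)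
  obtain ⟨δ₂, hδ₂, hδ₂'⟩ := Metric.continuousAt_iff.mp (hfc μhi hμhi0) (ε/2) (half_pos hε)
  set ε' : ℝ := min (min (δ₁/2) (δ₂/2)) (μlo/2) with hε'def
  have hε'pos : 0 < ε' := by
    apply lt_min (lt_min (half_pos hδ₁) (half_pos hδ₂)) (half_pos hμ0)
  have hε'lo : ε' ≤ μlo / 2 := min_le_right _ _
  have hε'δ₁ : ε' < δ₁ := lt_of_le_of_lt ((min_le_left _ _).trans (min_le_left _ _)) (by linarith)
  have hε'δ₂ : ε' < δ₂ := lt_of_le_of_lt ((min_le_left _ _).trans (min_le_right _ _)) (by linarith)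
  have hν : 0 < μlo - ε' := by linarith
  have hnu2 : 0 < μhi + ε' := by linarith
  -- key numeric consequences
  have hf1 : π / Real.sqrt (μlo - ε') < π / Real.sqrt μlo + ε/2 := by
    have := hδ₁' (x := μlo - ε') (by rw [Real.dist_eq]; rw [abs_of_nonpos (by linarith)]; simpa using hε'δ₁)
    rw [Real.dist_eq, abs_lt] at this
    linarith [this.2]
  have hf2 : π / Real.sqrt μhi - ε/2 < π / Real.sqrt (μhi + ε') := by
    have := hδ₂' (x := μhi + ε') (by rw [Real.dist_eq]; rw [abs_of_nonneg (by linarith)]; simpa using hε'δ₂)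
    rw [Real.dist_eq, abs_lt] at this
    linarith [this.1]
  -- the constants
  obtain ⟨M₁, hM₁, hM₁'⟩ := hlo ε' hε'pos
  obtain ⟨M₂, hM₂, hM₂'⟩ := hhi ε' hε'pos
  set M : ℝ := max M₁ M₂ with hMdef
  have hM : 0 < M := lt_of_lt_of_le hM₁ (le_max_left _ _)
  -- periodic reduction of bounds
  have hper : ∀ v : ℝ, Function.Periodic (fun t => h t v) T := fun v t => hh_per t v
  have hred : ∀ t v : ℝ, h t v = h (t - ⌊t/T⌋ * T) v := fun t v =>
    ((hper v).sub_int_mul_eq ⌊t/T⌋).symm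
  have hmem : ∀ t : ℝ, t - ⌊t/T⌋ * T ∈ Icc (0:ℝ) T := fun t =>
    ⟨Int.sub_floor_div_mul_nonneg t hT, (Int.sub_floor_div_mul_lt t hT).le⟩
  have hB1 : ∀ t v : ℝ, M ≤ v → μlo - ε' < h t v / v := by
    intro t v hv
    rw [hred t v]
    exact hM₁' _ (hmem t) v ((le_max_left _ _).trans hv)
  have hB2 : ∀ t v : ℝ, M ≤ v → h t v / v < μhi + ε' := by
    intro t v hv
    rw [hred t v]
    exact hM₂' _ (hmem t) v ((le_max_right _ _).trans hv)
  set c₁ : ℝ := Real.sqrt (μlo - ε') with hc₁def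
  set c₂ : ℝ := Real.sqrt (μhi + ε') with hc₂def
  have hc₁ : 0 < c₁ := Real.sqrt_pos.mpr hν
  have hc₂ : 0 < c₂ := Real.sqrt_pos.mpr hnu2
  have hc₁sq : c₁^2 = μlo - ε' := Real.sq_sqrt hν.le
  have hc₂sq : c₂^2 = μhi + ε' := Real.sq_sqrt hnu2.le
  set K₀ : ℝ := 4*M/ε + 1 with hK₀def
  have hK₀ : 0 < K₀ := by positivity
  have hMK : M / K₀ < ε/4 := by
    rw [div_lt_iff₀ hK₀]
    have h4 : (4:ℝ)*M/ε*ε = 4*M := by field_simp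
    nlinarith [mul_pos hM hε]
  refine ⟨Real.sqrt (M^2 + K₀^2), Real.sqrt_pos.mpr (by positivity), ?_⟩
  set χ : ℝ := Real.sqrt (M^2 + K₀^2) with hχdef
  have hχsq : χ^2 = M^2 + K₀^2 := Real.sq_sqrt (by positivity)
  intro x x' t₂ t₃ hlt hode hx2 hx3 hpos hball
  -- derivative and continuity facts
  have hdx : ∀ t ∈ Icc t₂ t₃, HasDerivWithinAt x (x' t) (Icc t₂ t₃) t := fun t ht => (hode t ht).1
  have hdx' : ∀ t ∈ Icc t₂ t₃, HasDerivWithinAt x' (-(h t (x t))) (Icc t₂ t₃) t :=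
    fun t ht => (hode t ht).2
  have hcx : ContinuousOn x (Icc t₂ t₃) := fun t ht => (hdx t ht).continuousWithinAt
  have hcx' : ContinuousOn x' (Icc t₂ t₃) := fun t ht => (hdx' t ht).continuousWithinAt
  have hDx : ∀ t ∈ Ioo t₂ t₃, HasDerivAt x (x' t) t := fun t ht =>
    (hdx t (Ioo_subset_Icc_self ht)).hasDerivAt (Icc_mem_nhds ht.1 ht.2)
  have hDx' : ∀ t ∈ Ioo t₂ t₃, HasDerivAt x' (-(h t (x t))) t := fun t ht =>
    (hdx' t (Ioo_subset_Icc_self ht)).hasDerivAt (Icc_mem_nhds ht.1 ht.2)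
  have hxnn : ∀ t ∈ Icc t₂ t₃, 0 ≤ x t := by
    intro t ht
    rcases eq_or_lt_of_le ht.1 with rfl | h1
    · exact hx2.ge
    rcases eq_or_lt_of_le ht.2 with rfl | h2
    · exact hx3.ge
    · exact (hpos t ⟨h1, h2⟩).le
  have hK : ∀ t ∈ Icc t₂ t₃, x t ≤ M → K₀ < |x' t| := by
    intro t ht hxM
    have hb := hball t ht
    rw [hχsq] at hb
    have h1 : (x t)^2 ≤ M^2 := by nlinarith only [hxnn t ht, hxM]
    have h2 : K₀^2 < |x' t|^2 := by rw [sq_abs]; nlinarith only [hb, h1]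
    exact lt_of_pow_lt_pow_left₀ 2 (abs_nonneg _) h2
  -- x' t₂ > K₀
  have hx'2 : K₀ < x' t₂ := by
    have habs := hK t₂ (left_mem_Icc.2 hlt.le) (by rw [hx2]; exact hM.le)
    rcases lt_abs.1 habs with h1 | h1
    · exact h1
    · exfalso
      have hneg : x' t₂ < 0 := by linarith
      obtain ⟨t, htu, hts⟩ := my_slope_lt_witness (f := x) (s := Icc t₂ t₃) (u := Ioo t₂ t₃)
        (fun r hr => ⟨Ioo_subset_Icc_self hr, by simp; exact ne_of_gt hr.1⟩)
        (my_nebot_left hlt) (hdx t₂ (left_mem_Icc.2 hlt.le)) hneg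
      rw [hx2, sub_zero] at hts
      rcases div_neg_iff.1 hts with ⟨_, hc⟩ | ⟨hc, _⟩
      · linarith [htu.1]
      · exact absurd (hpos t htu) (by linarith)
  -- x' t₃ < -K₀
  have hx'3 : x' t₃ < -K₀ := by
    have habs := hK t₃ (right_mem_Icc.2 hlt.le) (by rw [hx3]; exact hM.le)
    rcases lt_abs.1 habs with h1 | h1
    · exfalso
      have hposd : 0 < x' t₃ := by linarith
      obtain ⟨t, htu, hts⟩ := my_slope_gt_witness (f := x) (s := Icc t₂ t₃) (u := Ioo t₂ t₃)
        (fun r hr => ⟨Ioo_subset_Icc_self hr, by simp; exact ne_of_lt hr.2⟩)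
        (my_nebot_right hlt) (hdx t₃ (right_mem_Icc.2 hlt.le)) hposd
      rw [hx3, sub_zero] at hts
      rcases div_pos_iff.1 hts with ⟨_, hc⟩ | ⟨hc, _⟩
      · linarith [htu.2]
      · exact absurd (hpos t htu) (by linarith)
    · linarith
  -- sign propagation lemmas
  have sign_pos : ∀ a b : ℝ, t₂ ≤ a → b ≤ t₃ → a ≤ b → (∀ t ∈ Icc a b, x' t ≠ 0) →
      0 < x' a → ∀ t ∈ Icc a b, 0 < x' t := by
    intro a b ha hb hab hne hpa t ht
    by_contra hle
    push_neg at hle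
    have hsub : Icc a t ⊆ Icc t₂ t₃ := Icc_subset_Icc ha (ht.2.trans hb)
    have hiv := intermediate_value_Icc' ht.1 (hcx'.mono hsub)
    have : (0:ℝ) ∈ Icc (x' t) (x' a) := ⟨hle, hpa.le⟩
    obtain ⟨s, hs, hs0⟩ := hiv this
    exact hne s (Icc_subset_Icc le_rfl ht.2 hs) hs0
  have sign_neg : ∀ a b : ℝ, t₂ ≤ a → b ≤ t₃ → a ≤ b → (∀ t ∈ Icc a b, x' t ≠ 0) →
      x' b < 0 → ∀ t ∈ Icc a b, x' t < 0 := by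
    intro a b ha hb hab hne hnb t ht
    by_contra hle
    push_neg at hle
    have hsub : Icc t b ⊆ Icc t₂ t₃ := Icc_subset_Icc (ht.1.trans' ha) hb
    have hiv := intermediate_value_Icc' ht.2 (hcx'.mono hsub)
    have : (0:ℝ) ∈ Icc (x' b) (x' t) := ⟨hnb.le, hle⟩
    obtain ⟨s, hs, hs0⟩ := hiv this
    exact hne s (Icc_subset_Icc ht.1 le_rfl hs) hs0
  -- the set A where x ≥ M
  set A : Set ℝ := Icc t₂ t₃ ∩ x ⁻¹' (Ici M) with hAdef
  have hAclosed : IsClosed A := hcx.preimage_isClosed_of_isClosed isClosed_Icc isClosed_Ici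
  have hAsub : A ⊆ Icc t₂ t₃ := inter_subset_left
  have hAne : A.Nonempty := by
    by_contra hcon
    rw [not_nonempty_iff_eq_empty] at hcon
    have hsmall : ∀ t ∈ Icc t₂ t₃, x t < M := by
      intro t ht
      by_contra hge
      push_neg at hge
      have hmemA : t ∈ A := ⟨ht, hge⟩
      rw [hcon] at hmemA
      exact hmemA
    have hne0 : ∀ t ∈ Icc t₂ t₃, x' t ≠ 0 := by
      intro t ht
      have := hK t ht (hsmall t ht).le
      intro h0; rw [h0] at this; simp at this; linarith
    have hall := sign_pos t₂ t₃ le_rfl le_rfl hlt.le hne0 (by linarith)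
    obtain ⟨c, hc, hcs⟩ := exists_hasDerivAt_eq_slope x x' hlt hcx hDx
    have h0 : x' c = 0 := by rw [hx2, hx3] at hcs; simpa using hcs
    have := hall c (Ioo_subset_Icc_self hc)
    rw [h0] at this
    exact lt_irrefl _ this
  have hAbb : BddBelow A := bddBelow_Icc.mono hAsub
  have hAba : BddAbove A := (bddAbove_Icc (a := t₂) (b := t₃)).mono hAsub
  set s₂ : ℝ := sInf A with hs₂def
  set s₃ : ℝ := sSup A with hs₃def
  have hs₂A : s₂ ∈ A := hAclosed.csInf_mem hAne hAbb
  have hs₃A : s₃ ∈ A := hAclosed.csSup_mem hAne hAba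
  have hs₂Icc : s₂ ∈ Icc t₂ t₃ := hAsub hs₂A
  have hs₃Icc : s₃ ∈ Icc t₂ t₃ := hAsub hs₃A
  have hs23 : s₂ ≤ s₃ := csInf_le_csSup hAne hAbb hAba
  have ht2s2 : t₂ < s₂ := by
    rcases eq_or_lt_of_le hs₂Icc.1 with heq | hlt2
    · exfalso
      have : M ≤ x s₂ := hs₂A.2
      rw [← heq, hx2] at this
      linarith
    · exact hlt2
  have hs3t3 : s₃ < t₃ := by
    rcases eq_or_lt_of_le hs₃Icc.2 with heq | hlt2
    · exfalso
      have : M ≤ x s₃ := hs₃A.2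
      rw [heq, hx3] at this
      linarith
    · exact hlt2
  have hlow : ∀ t ∈ Icc t₂ t₃, t < s₂ → x t < M := by
    intro t ht hts
    by_contra hge
    push_neg at hge
    exact absurd (csInf_le hAbb (⟨ht, hge⟩ : t ∈ A)) (by linarith)
  have hhigh : ∀ t ∈ Icc t₂ t₃, s₃ < t → x t < M := by
    intro t ht hts
    by_contra hge
    push_neg at hge
    exact absurd (le_csSup hAba (⟨ht, hge⟩ : t ∈ A)) (by linarith)
  have hxs₂ : x s₂ = M := by
    refine le_antisymm ?_ hs₂A.2
    have hne : (𝓝[Ioo t₂ s₂] s₂).NeBot := my_nebot_right ht2s2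
    have hcw : Tendsto x (𝓝[Ioo t₂ s₂] s₂) (𝓝 (x s₂)) :=
      (hcx s₂ hs₂Icc).mono (fun r hr => ⟨hr.1.le, hr.2.le.trans hs₂Icc.2⟩)
    refine le_of_tendsto hcw ?_
    filter_upwards [eventually_mem_nhdsWithin] with r hr
    exact (hlow r ⟨hr.1.le, hr.2.le.trans hs₂Icc.2⟩ hr.2).le
  have hxs₃ : x s₃ = M := by
    refine le_antisymm ?_ hs₃A.2
    have hne : (𝓝[Ioo s₃ t₃] s₃).NeBot := my_nebot_left hs3t3
    have hcw : Tendsto x (𝓝[Ioo s₃ t₃] s₃) (𝓝 (x s₃)) :=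
      (hcx s₃ hs₃Icc).mono (fun r hr => ⟨hs₃Icc.1.trans hr.1.le, hr.2.le⟩)
    refine le_of_tendsto hcw ?_
    filter_upwards [eventually_mem_nhdsWithin] with r hr
    exact (hhigh r ⟨hs₃Icc.1.trans hr.1.le, hr.2.le⟩ hr.1).le
  -- derivative signs at s₂ and s₃
  have hx's₂ : K₀ < x' s₂ := by
    have habs := hK s₂ hs₂Icc (le_of_eq hxs₂)
    rcases lt_abs.1 habs with h1 | h1
    · exact h1
    · exfalso
      have hneg : x' s₂ < 0 := by linarith
      obtain ⟨t, htu, hts⟩ := my_slope_lt_witness (f := x) (s := univ) (u := Ioo t₂ s₂)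
        (fun r hr => ⟨trivial, by simp; exact ne_of_lt hr.2⟩)
        (my_nebot_right ht2s2)
        ((hDx s₂ ⟨ht2s2, lt_of_le_of_lt hs23 hs3t3⟩).hasDerivWithinAt) hneg
      rw [hxs₂] at hts
      have htneg : t - s₂ < 0 := by linarith [htu.2]
      rcases div_neg_iff.1 hts with ⟨hc, _⟩ | ⟨_, hc⟩
      · have : x t < M := hlow t ⟨htu.1.le, htu.2.le.trans hs₂Icc.2⟩ htu.2
        linarith
      · linarith
  have hx's₃ : x' s₃ < -K₀ := by
    have habs := hK s₃ hs₃Icc (le_of_eq hxs₃)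
    rcases lt_abs.1 habs with h1 | h1
    · exfalso
      have hposd : 0 < x' s₃ := by linarith
      obtain ⟨t, htu, hts⟩ := my_slope_gt_witness (f := x) (s := univ) (u := Ioo s₃ t₃)
        (fun r hr => ⟨trivial, by simp; exact ne_of_gt hr.1⟩)
        (my_nebot_left hs3t3)
        ((hDx s₃ ⟨lt_of_lt_of_le ht2s2 hs23, hs3t3⟩).hasDerivWithinAt) hposd
      rw [hxs₃] at hts
      rcases div_pos_iff.1 hts with ⟨hc, _⟩ | ⟨_, hc⟩
      · have : x t < M := hhigh t ⟨hs₃Icc.1.trans htu.1.le, htu.2.le⟩ htu.1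
        linarith
      · linarith [htu.1]
    · linarith
  have hs23' : s₂ < s₃ := by
    rcases eq_or_lt_of_le hs23 with heq | hlt2
    · exfalso; rw [heq] at hx's₂; linarith
    · exact hlt2
  have hIccsub : Icc s₂ s₃ ⊆ Ioo t₂ t₃ := fun r hr => ⟨lt_of_lt_of_le ht2s2 hr.1, lt_of_le_of_lt hr.2 hs3t3⟩
  have hIccsub' : Icc s₂ s₃ ⊆ Icc t₂ t₃ := hIccsub.trans Ioo_subset_Icc_self
  -- no dips below M in the middle
  have hmid : ∀ t ∈ Icc s₂ s₃, M ≤ x t := by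
    intro t ht
    by_contra hcon
    push_neg at hcon
    have htIcc : t ∈ Icc t₂ t₃ := hIccsub' ht
    -- last time ≥ M before t
    set B : Set ℝ := Icc s₂ t ∩ x ⁻¹' (Ici M) with hBdef
    have hBclosed : IsClosed B := (hcx.mono (Icc_subset_Icc hs₂Icc.1 htIcc.2)).preimage_isClosed_of_isClosed isClosed_Icc isClosed_Ici
    have hBne : B.Nonempty := ⟨s₂, ⟨le_rfl, ht.1⟩, hxs₂.ge⟩
    have hBba : BddAbove B := (bddAbove_Icc (a := s₂) (b := t)).mono inter_subset_left
    set a : ℝ := sSup B with hadef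
    have haB : a ∈ B := hBclosed.csSup_mem hBne hBba
    have hat : a < t := by
      rcases eq_or_lt_of_le haB.1.2 with heq | hlt2
      · exfalso; rw [heq] at haB; exact absurd haB.2 (by simpa using hcon)
      · exact hlt2
    have haM : M ≤ x a := haB.2
    have hagt : ∀ r, a < r → r ≤ t → x r < M := by
      intro r hr1 hr2
      by_contra hge
      push_neg at hge
      exact absurd (le_csSup hBba (⟨⟨haB.1.1.trans hr1.le, hr2⟩, hge⟩ : r ∈ B)) (by linarith)
    -- first time ≥ M after t
    set C : Set ℝ := Icc t s₃ ∩ x ⁻¹' (Ici M) with hCdef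
    have hCclosed : IsClosed C := (hcx.mono (Icc_subset_Icc htIcc.1 hs₃Icc.2)).preimage_isClosed_of_isClosed isClosed_Icc isClosed_Ici
    have hCne : C.Nonempty := ⟨s₃, ⟨ht.2, le_rfl⟩, hxs₃.ge⟩
    have hCbb : BddBelow C := bddBelow_Icc.mono inter_subset_left
    set b : ℝ := sInf C with hbdef
    have hbC : b ∈ C := hCclosed.csInf_mem hCne hCbb
    have htb : t < b := by
      rcases eq_or_lt_of_le hbC.1.1 with heq | hlt2
      · exfalso; rw [← heq] at hbC; exact absurd hbC.2 (by simpa using hcon)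
      · exact hlt2
    have hbM : M ≤ x b := hbC.2
    have hblt : ∀ r, t ≤ r → r < b → x r < M := by
      intro r hr1 hr2
      by_contra hge
      push_neg at hge
      exact absurd (csInf_le hCbb (⟨⟨hr1, hr2.le.trans hbC.1.2⟩, hge⟩ : r ∈ C)) (by linarith)
    -- memberships
    have haIcc : a ∈ Icc t₂ t₃ := hIccsub' ⟨haB.1.1, haB.1.2.trans ht.2⟩
    have hbIcc : b ∈ Icc t₂ t₃ := hIccsub' ⟨ht.1.trans hbC.1.1, hbC.1.2⟩
    -- x' t nonzero, case on sign
    have hxt' := hK t htIcc hcon.le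
    rcases lt_abs.1 hxt' with h1 | h1
    · -- x' t > 0 : x' > 0 on (a,t], then MVT on [a,t] gives x t > x a ≥ M
      have hsgn : ∀ r, a < r → r ≤ t → 0 < x' r := by
        intro r hr1 hr2
        by_contra hle
        push_neg at hle
        have hrIcc : r ∈ Icc t₂ t₃ := hIccsub' ⟨haB.1.1.trans hr1.le, hr2.trans ht.2⟩
        have hiv := intermediate_value_Icc hr2 (hcx'.mono (Icc_subset_Icc hrIcc.1 htIcc.2))
        have h0m : (0:ℝ) ∈ Icc (x' r) (x' t) := ⟨hle, by linarith⟩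
        obtain ⟨w, hw, hw0⟩ := hiv h0m
        have hwlt : x w < M := by
          rcases eq_or_lt_of_le hw.1 with heq | hlt2
          · rw [← heq]
            exact hagt r hr1 hr2
          · exact hagt w (hr1.trans hlt2) hw.2
        have := hK w (hIccsub' ⟨haB.1.1.trans (hr1.le.trans hw.1), hw.2.trans ht.2⟩) hwlt.le
        rw [hw0] at this
        simp at this
        linarith
      obtain ⟨c, hc, hcs⟩ := exists_hasDerivAt_eq_slope x x' hat
        (hcx.mono (Icc_subset_Icc haIcc.1 htIcc.2))
        (fun r hr => hDx r ⟨lt_of_le_of_lt haIcc.1 hr.1, lt_of_lt_of_le hr.2 htIcc.2⟩)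
      have hcpos := hsgn c hc.1 hc.2.le
      rw [hcs] at hcpos
      have : 0 < x t - x a := by
        have hden : 0 < t - a := by linarith
        rcases div_pos_iff.1 hcpos with ⟨hn, _⟩ | ⟨_, hd⟩
        · exact hn
        · linarith
      linarith
    · -- x' t < 0 : x' < 0 on [t,b), then MVT on [t,b] gives x b < x t < M
      have hneg : x' t < 0 := by linarith
      have hsgn : ∀ r, t ≤ r → r < b → x' r < 0 := by
        intro r hr1 hr2
        by_contra hle
        push_neg at hle
        have hrIcc : r ∈ Icc t₂ t₃ := hIccsub' ⟨ht.1.trans hr1, hr2.le.trans hbC.1.2⟩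
        have hiv := intermediate_value_Icc hr1 (hcx'.mono (Icc_subset_Icc htIcc.1 hrIcc.2))
        have h0m : (0:ℝ) ∈ Icc (x' t) (x' r) := ⟨hneg.le, hle⟩
        obtain ⟨w, hw, hw0⟩ := hiv h0m
        have hwlt : x w < M := hblt w hw.1 (lt_of_le_of_lt hw.2 hr2)
        have := hK w (hIccsub' ⟨ht.1.trans hw.1, (hw.2.trans hr2.le).trans hbC.1.2⟩) hwlt.le
        rw [hw0] at this
        simp at this
        linarith
      obtain ⟨c, hc, hcs⟩ := exists_hasDerivAt_eq_slope x x' htb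
        (hcx.mono (Icc_subset_Icc htIcc.1 hbIcc.2))
        (fun r hr => hDx r ⟨lt_of_le_of_lt htIcc.1 hr.1, lt_of_lt_of_le hr.2 hbIcc.2⟩)
      have hcneg := hsgn c hc.1.le hc.2
      rw [hcs] at hcneg
      have : x b - x t < 0 := by
        have hden : 0 < b - t := by linarith
        rcases div_neg_iff.1 hcneg with ⟨_, hd⟩ | ⟨hn, _⟩
        · linarith
        · exact hn
      linarith
  -- edge time estimates
  have hedge2 : s₂ - t₂ < M / K₀ := by
    have hxle : ∀ r ∈ Icc t₂ s₂, x r ≤ M := by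
      intro r hr
      rcases eq_or_lt_of_le hr.2 with heq | hlt2
      · rw [heq, hxs₂]
      · exact (hlow r ⟨hr.1, hr.2.trans hs₂Icc.2⟩ hlt2).le
    have hne0 : ∀ r ∈ Icc t₂ s₂, x' r ≠ 0 := by
      intro r hr h0
      have := hK r ⟨hr.1, hr.2.trans hs₂Icc.2⟩ (hxle r hr)
      rw [h0] at this; simp at this; linarith
    have hall := sign_pos t₂ s₂ le_rfl hs₂Icc.2 hs₂Icc.1 hne0 (by linarith)
    have hallK : ∀ r ∈ Icc t₂ s₂, K₀ < x' r := by
      intro r hr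
      have h1 := hK r ⟨hr.1, hr.2.trans hs₂Icc.2⟩ (hxle r hr)
      have h2 := hall r hr
      rcases lt_abs.1 h1 with hh | hh
      · exact hh
      · linarith
    obtain ⟨c, hc, hcs⟩ := exists_hasDerivAt_eq_slope x x' ht2s2
      (hcx.mono (Icc_subset_Icc le_rfl hs₂Icc.2))
      (fun r hr => hDx r ⟨hr.1, lt_of_lt_of_le hr.2 hs₂Icc.2⟩)
    have hcK := hallK c (Ioo_subset_Icc_self hc)
    rw [hcs, hxs₂, hx2, sub_zero] at hcK
    rw [lt_div_iff₀ hK₀]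
    rw [lt_div_iff₀ (by linarith : (0:ℝ) < s₂ - t₂)] at hcK
    linarith only [hcK]
  have hedge3 : t₃ - s₃ < M / K₀ := by
    have hxle : ∀ r ∈ Icc s₃ t₃, x r ≤ M := by
      intro r hr
      rcases eq_or_lt_of_le hr.1 with heq | hlt2
      · rw [← heq, hxs₃]
      · exact (hhigh r ⟨hs₃Icc.1.trans hr.1, hr.2⟩ hlt2).le
    have hne0 : ∀ r ∈ Icc s₃ t₃, x' r ≠ 0 := by
      intro r hr h0
      have := hK r ⟨hs₃Icc.1.trans hr.1, hr.2⟩ (hxle r hr)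
      rw [h0] at this; simp at this; linarith
    have hall := sign_neg s₃ t₃ hs₃Icc.1 le_rfl hs₃Icc.2 hne0 (by linarith)
    have hallK : ∀ r ∈ Icc s₃ t₃, x' r < -K₀ := by
      intro r hr
      have h1 := hK r ⟨hs₃Icc.1.trans hr.1, hr.2⟩ (hxle r hr)
      have h2 := hall r hr
      rcases lt_abs.1 h1 with hh | hh
      · linarith
      · linarith
    obtain ⟨c, hc, hcs⟩ := exists_hasDerivAt_eq_slope x x' hs3t3
      (hcx.mono (Icc_subset_Icc hs₃Icc.1 le_rfl))
      (fun r hr => hDx r ⟨lt_of_le_of_lt hs₃Icc.1 hr.1, hr.2⟩)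
    have hcK := hallK c (Ioo_subset_Icc_self hc)
    rw [hcs, hxs₃, hx3, zero_sub] at hcK
    rw [lt_div_iff₀ hK₀]
    have hden : (0:ℝ) < t₃ - s₃ := by linarith
    rw [div_lt_iff₀ hden] at hcK
    linarith only [hcK]
  -- middle interval: angle function estimates
  have hxpos : ∀ t ∈ Icc s₂ s₃, 0 < x t := fun t ht => lt_of_lt_of_le hM (hmid t ht)
  have hθ : ∀ c : ℝ, 0 < c → ∀ t ∈ Icc s₂ s₃,
      HasDerivAt (fun s => Real.arctan (x' s / (c * x s)))
        (c * ((-(h t (x t))) * x t - (x' t)^2) / (c^2 * (x t)^2 + (x' t)^2)) t := by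
    intro c hc t ht
    exact my_theta_deriv x x' _ c t hc (hxpos t ht) (hDx t (hIccsub ht)) (hDx' t (hIccsub ht))
  have hdenpos : ∀ c : ℝ, 0 < c → ∀ t ∈ Icc s₂ s₃, 0 < c^2 * (x t)^2 + (x' t)^2 := by
    intro c hc t ht
    have := hxpos t ht
    positivity
  have hD1 : ∀ t ∈ Icc s₂ s₃,
      c₁ * ((-(h t (x t))) * x t - (x' t)^2) / (c₁^2 * (x t)^2 + (x' t)^2) ≤ -c₁ := by
    intro t ht
    have hX := hxpos t ht
    have hb := hB1 t (x t) (hmid t ht)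
    rw [← hc₁sq] at hb
    have hb' : c₁^2 * x t < h t (x t) := by
      rw [lt_div_iff₀ hX] at hb
      linarith only [hb]
    rw [div_le_iff₀ (hdenpos c₁ hc₁ t ht)]
    have hkey : 0 < (c₁ * x t) * (h t (x t) - c₁^2 * x t) :=
      mul_pos (mul_pos hc₁ hX) (by linarith only [hb'])
    nlinarith only [hkey]
  have hD2 : ∀ t ∈ Icc s₂ s₃,
      -c₂ ≤ c₂ * ((-(h t (x t))) * x t - (x' t)^2) / (c₂^2 * (x t)^2 + (x' t)^2) := by
    intro t ht
    have hX := hxpos t ht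
    have hb := hB2 t (x t) (hmid t ht)
    rw [← hc₂sq] at hb
    have hb' : h t (x t) < c₂^2 * x t := by
      rw [div_lt_iff₀ hX] at hb
      linarith only [hb]
    rw [le_div_iff₀ (hdenpos c₂ hc₂ t ht)]
    have hkey : 0 < (c₂ * x t) * (c₂^2 * x t - h t (x t)) :=
      mul_pos (mul_pos hc₂ hX) (by linarith only [hb'])
    nlinarith only [hkey]
  have hs₂mem : s₂ ∈ Icc s₂ s₃ := left_mem_Icc.2 hs23
  have hs₃mem : s₃ ∈ Icc s₂ s₃ := right_mem_Icc.2 hs23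
  -- upper bound on middle time
  have hg₁ : AntitoneOn (fun s => Real.arctan (x' s / (c₁ * x s)) + c₁ * s) (Icc s₂ s₃) := by
    apply antitoneOn_of_deriv_nonpos (convex_Icc s₂ s₃)
    · intro t ht
      exact (((hθ c₁ hc₁ t ht).add ((hasDerivAt_id t).const_mul c₁)).continuousAt).continuousWithinAt
    · intro t ht
      rw [interior_Icc] at ht
      exact (((hθ c₁ hc₁ t (Ioo_subset_Icc_self ht)).add
        ((hasDerivAt_id t).const_mul c₁)).differentiableAt).differentiableWithinAt
    · intro t ht
      rw [interior_Icc] at ht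
      have hlin : HasDerivAt (fun s : ℝ => c₁ * s) c₁ t := by
        simpa using (hasDerivAt_id t).const_mul c₁
      have hd : HasDerivAt (fun s => Real.arctan (x' s / (c₁ * x s)) + c₁ * s) _ t := (hθ c₁ hc₁ t (Ioo_subset_Icc_self ht)).add hlin
      rw [hd.deriv]
      have := hD1 t (Ioo_subset_Icc_self ht)
      linarith only [this]
  have hmidupper : s₃ - s₂ < π / c₁ := by
    have h1 := hg₁ hs₂mem hs₃mem hs23
    have h2 := Real.arctan_lt_pi_div_two (x' s₂ / (c₁ * x s₂))
    have h3 := Real.neg_pi_div_two_lt_arctan (x' s₃ / (c₁ * x s₃))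
    rw [lt_div_iff₀ hc₁]
    simp only at h1
    nlinarith only [h1, h2, h3]
  -- lower bound on middle time
  have hg₂ : MonotoneOn (fun s => Real.arctan (x' s / (c₂ * x s)) + c₂ * s) (Icc s₂ s₃) := by
    apply monotoneOn_of_deriv_nonneg (convex_Icc s₂ s₃)
    · intro t ht
      exact (((hθ c₂ hc₂ t ht).add ((hasDerivAt_id t).const_mul c₂)).continuousAt).continuousWithinAt
    · intro t ht
      rw [interior_Icc] at ht
      exact (((hθ c₂ hc₂ t (Ioo_subset_Icc_self ht)).add
        ((hasDerivAt_id t).const_mul c₂)).differentiableAt).differentiableWithinAt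
    · intro t ht
      rw [interior_Icc] at ht
      have hlin : HasDerivAt (fun s : ℝ => c₂ * s) c₂ t := by
        simpa using (hasDerivAt_id t).const_mul c₂
      have hd : HasDerivAt (fun s => Real.arctan (x' s / (c₂ * x s)) + c₂ * s) _ t := (hθ c₂ hc₂ t (Ioo_subset_Icc_self ht)).add hlin
      rw [hd.deriv]
      have := hD2 t (Ioo_subset_Icc_self ht)
      linarith only [this]
  have harc : Real.arctan (K₀/(c₂*M)) = π/2 - Real.arctan (c₂*M/K₀) := by
    rw [show K₀/(c₂*M) = ((c₂*M)/K₀)⁻¹ by rw [inv_div]]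
    exact Real.arctan_inv_of_pos (by positivity)
  have harc2 : Real.arctan (c₂*M/K₀) ≤ c₂*M/K₀ := my_arctan_le_self (by positivity)
  have hth2 : π/2 - c₂*M/K₀ ≤ Real.arctan (x' s₂ / (c₂ * x s₂)) := by
    rw [hxs₂]
    have harg : K₀ / (c₂ * M) ≤ x' s₂ / (c₂ * M) :=
      (div_le_div_iff_of_pos_right (by positivity)).2 hx's₂.le
    have h1 : Real.arctan (K₀/(c₂*M)) ≤ Real.arctan (x' s₂/(c₂*M)) :=
      Real.arctan_strictMono.monotone harg
    rw [harc] at h1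
    linarith only [h1, harc2]
  have hth3 : Real.arctan (x' s₃ / (c₂ * x s₃)) ≤ -(π/2) + c₂*M/K₀ := by
    rw [hxs₃]
    have harg : x' s₃ / (c₂ * M) ≤ -K₀ / (c₂ * M) :=
      (div_le_div_iff_of_pos_right (by positivity)).2 hx's₃.le
    have h1 : Real.arctan (x' s₃/(c₂*M)) ≤ Real.arctan (-K₀/(c₂*M)) :=
      Real.arctan_strictMono.monotone harg
    rw [neg_div, Real.arctan_neg, harc] at h1
    linarith only [h1, harc2]
  have hmidlower : π / c₂ - 2*(M/K₀) ≤ s₃ - s₂ := by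
    have h1 := hg₂ hs₂mem hs₃mem hs23
    simp only at h1
    rw [hxs₂] at hth2
    rw [hxs₃] at hth3
    rw [hxs₂, hxs₃] at h1
    have he : c₂ * M / K₀ = M / K₀ * c₂ := by ring
    have key : π - 2*(M/K₀)*c₂ ≤ c₂ * (s₃ - s₂) := by linarith [he, h1, hth2, hth3]
    rw [sub_le_iff_le_add, div_le_iff₀ hc₂]
    nlinarith only [key]
  -- conclusion
  constructor
  · have e1 : 2*(M/K₀) < ε/2 := by linarith only [hMK]
    have e2 : π / Real.sqrt μhi - ε < s₃ - s₂ := by linarith only [hf2, hmidlower, e1]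
    linarith only [e2, ht2s2, hs3t3]
  · have e1 : M/K₀ < ε/4 := hMK
    linarith only [hedge2, hedge3, hmidupper, hf1, e1]
end

section
/- Let T > 0 and let h : ℝ × [0,∞) → ℝ be continuous and T-periodic in its first variable. Assume there exist constants 0 < μ̌ ≤ μ̂ with μ̌ ≤ liminf_{x→+∞} h(t,x)/x and limsup_{x→+∞} h(t,x)/x ≤ μ̂ uniformly in t ∈ [0,T], and constants a, b > 0 with |h(t,x)| ≤ ax + b for all t and all x ≥ 0. Then there exist χ̄ > 0, θ₀ > 0 and l₀ > 0 such that for every solution x of x'' + h(t,x) = 0 and every time t at which x(t) ≥ 0 and x(t)² + x'(t)² > χ̄², writing the orbit in polar coordinates x(t) = ϱ(t)cos θ(t), x'(t) = ϱ(t)sin θ(t), one has −θ'(t) = (x'(t)² + x(t)·h(t,x(t)))/(x(t)² + x'(t)²) > θ₀ and |ϱ'(t)| = |x'(t)·(x(t) − h(t,x(t)))|/√(x(t)² + x'(t)²) < l₀·ϱ(t); consequently |dϱ/d(−θ)| < K·ϱ along the orbit, with K = l₀/θ₀. -/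
set_option maxHeartbeats 4000000


open Real Set

theorem statement10
    (T : ℝ) (hT : 0 < T)
    (h : ℝ → ℝ → ℝ)
    (hh_cont : ContinuousOn (fun q : ℝ × ℝ => h q.1 q.2) (univ ×ˢ Ici (0 : ℝ)))
    (hh_per : ∀ t x, h (t + T) x = h t x)
    (μlo μhi : ℝ) (hμ0 : 0 < μlo) (hμ : μlo ≤ μhi)
    (hlo : ∀ ε > (0 : ℝ), ∃ M : ℝ, 0 < M ∧ ∀ t ∈ Icc (0 : ℝ) T, ∀ x : ℝ, M ≤ x →
      μlo - ε < h t x / x)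
    (hhi : ∀ ε > (0 : ℝ), ∃ M : ℝ, 0 < M ∧ ∀ t ∈ Icc (0 : ℝ) T, ∀ x : ℝ, M ≤ x →
      h t x / x < μhi + ε)
    (a b : ℝ) (ha : 0 < a) (hb : 0 < b)
    (hgrowth : ∀ t : ℝ, ∀ x : ℝ, 0 ≤ x → |h t x| ≤ a * x + b) :
    ∃ χbar θ₀ l₀ : ℝ, 0 < χbar ∧ 0 < θ₀ ∧ 0 < l₀ ∧
      ∀ x x' : ℝ → ℝ,
        (∀ t : ℝ, HasDerivAt x (x' t) t ∧ HasDerivAt x' (-(h t (x t))) t) →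
        ∀ t : ℝ, 0 ≤ x t → χbar ^ 2 < (x t) ^ 2 + (x' t) ^ 2 →
          -- the angular velocity −θ' is bounded from below by θ₀
          θ₀ < ((x' t) ^ 2 + x t * h t (x t)) / ((x t) ^ 2 + (x' t) ^ 2) ∧
          -- the radial velocity |ϱ'| is bounded by l₀ ϱ
          |x' t * (x t - h t (x t))| / Real.sqrt ((x t) ^ 2 + (x' t) ^ 2) <
            l₀ * Real.sqrt ((x t) ^ 2 + (x' t) ^ 2) ∧
          -- consequently |dϱ/d(−θ)| < K ϱ with K = l₀/θ₀
          |x' t * (x t - h t (x t))| / Real.sqrt ((x t) ^ 2 + (x' t) ^ 2) <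
            (l₀ / θ₀) * (((x' t) ^ 2 + x t * h t (x t)) / ((x t) ^ 2 + (x' t) ^ 2)) *
              Real.sqrt ((x t) ^ 2 + (x' t) ^ 2) := by

  -- choose M from the lower-limit hypothesis with ε = μlo/2
  obtain ⟨M₀, hM₀pos, hM₀⟩ := hlo (μlo/2) (by positivity)
  set M : ℝ := max M₀ 1 with hMdef
  have hM1 : (1:ℝ) ≤ M := le_max_right _ _
  have hMpos : 0 < M := lt_of_lt_of_le one_pos hM1
  set C : ℝ := a*M^2 + b*M with hCdef
  have hCpos : 0 < C := by positivity
  set χ : ℝ := Real.sqrt (2*(M^2+C)) + 1 with hχdef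
  have hχpos : 0 < χ := by positivity
  have hχ2 : 2*(M^2+C) ≤ χ^2 := by
    have h1 : Real.sqrt (2*(M^2+C))^2 = 2*(M^2+C) := Real.sq_sqrt (by positivity)
    nlinarith [Real.sqrt_nonneg (2*(M^2+C))]
  set c : ℝ := min (1/2 : ℝ) (μlo/2) with hcdef
  have hcpos : 0 < c := lt_min (by norm_num) (by positivity)
  have hc1 : c ≤ 1/2 := min_le_left _ _
  set l₀ : ℝ := (1+a)/2 + b/χ + 1 with hl₀def
  have hl₀pos : 0 < l₀ := by positivity
  refine ⟨χ, c/2, l₀, hχpos, by positivity, hl₀pos, ?_⟩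
  intro x v _ t hx hS
  set X := x t with hX
  set V := v t with hV
  set S := X^2+V^2 with hSdef
  have hSpos : 0 < S := lt_trans (by positivity) hS
  have hsqrtSpos : 0 < Real.sqrt S := Real.sqrt_pos.2 hSpos
  have hsqS : Real.sqrt S ^ 2 = S := Real.sq_sqrt hSpos.le
  have hsqrtS : χ < Real.sqrt S := by
    have := Real.sqrt_lt_sqrt (by positivity : (0:ℝ) ≤ χ^2) hS
    rwa [Real.sqrt_sq hχpos.le] at this
  -- periodic reduction of h t X to a time in [0, T]
  have hht : h t X = h (t - ⌊t/T⌋*T) X := by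
    have hp : Function.Periodic (fun s => h s X) T := fun s => hh_per s X
    exact (hp.sub_int_mul_eq (x := t) ⌊t/T⌋).symm
  have hsmem : t - ⌊t/T⌋*T ∈ Icc (0:ℝ) T :=
    ⟨Int.sub_floor_div_mul_nonneg t hT, le_of_lt (Int.sub_floor_div_mul_lt t hT)⟩
  -- key lower bound: V^2 + X * h t X ≥ c * S
  have hkey : c * S ≤ V^2 + X * h t X := by
    rcases le_or_gt M X with hXM | hXM
    · -- large X case
      have hXpos : 0 < X := lt_of_lt_of_le hMpos hXM
      have hdiv : μlo - μlo/2 < h (t - ⌊t/T⌋*T) X / X :=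
        hM₀ _ hsmem X (le_trans (le_max_left _ _) hXM)
      have hdiv' : μlo/2 < h t X / X := by rw [hht]; linarith
      have hxh : (μlo/2) * X ≤ h t X := le_of_lt ((lt_div_iff₀ hXpos).mp hdiv')
      have hcle : c ≤ μlo/2 := min_le_right _ _
      nlinarith [sq_nonneg V, sq_nonneg X, mul_le_mul_of_nonneg_left hxh hXpos.le]
    · -- small X case
      have hhb : |h t X| ≤ a * X + b := hgrowth t X hx
      have h1 : -(a*X+b) ≤ h t X := neg_le_of_abs_le hhb
      have hXab : X * (a*X+b) ≤ C := by
        have h4 : X^2 ≤ M^2 := by nlinarith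
        have h5 : b*X ≤ b*M := mul_le_mul_of_nonneg_left hXM.le hb.le
        have h6 : a*X^2 ≤ a*M^2 := mul_le_mul_of_nonneg_left h4 ha.le
        rw [hCdef]; nlinarith
      have h2 : -C ≤ X * h t X := by
        have := mul_le_mul_of_nonneg_left h1 hx
        nlinarith
      have h3 : 2*(M^2+C) < S := lt_of_le_of_lt hχ2 hS
      have hX2 : X^2 ≤ M^2 := by nlinarith
      have hV2 : S - M^2 ≤ V^2 := by rw [hSdef]; linarith
      have hhalf : S/2 ≤ V^2 + X * h t X := by linarith
      nlinarith
  -- first goal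
  have goal1 : c/2 < (V^2 + X * h t X) / S := by
    rw [lt_div_iff₀ hSpos]
    nlinarith
  -- second goal
  have goal2 : |V * (X - h t X)| / Real.sqrt S < l₀ * Real.sqrt S := by
    rw [div_lt_iff₀ hsqrtSpos, mul_assoc, ← pow_two, hsqS]
    have hb1 : |V * (X - h t X)| ≤ |V| * (X + (a*X + b)) := by
      rw [abs_mul]
      refine mul_le_mul_of_nonneg_left ?_ (abs_nonneg V)
      calc |X - h t X| ≤ |X| + |h t X| := abs_sub _ _
        _ ≤ X + (a*X + b) := by
            rw [abs_of_nonneg hx]; linarith [hgrowth t X hx]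
    have hVX : |V| * X ≤ S/2 := by
      nlinarith [sq_nonneg (|V| - X), sq_abs V]
    have hbV : b * |V| ≤ (b/χ) * S := by
      have h1 : |V| ≤ Real.sqrt S := by
        rw [← Real.sqrt_sq_eq_abs]
        exact Real.sqrt_le_sqrt (by nlinarith [sq_nonneg X])
      have h2 : Real.sqrt S ≤ S / χ := by
        rw [le_div_iff₀ hχpos]
        nlinarith
      calc b * |V| ≤ b * (S/χ) := by
            refine mul_le_mul_of_nonneg_left (le_trans h1 h2) hb.le
        _ = (b/χ) * S := by ring
    calc |V * (X - h t X)| ≤ |V| * (X + (a*X + b)) := hb1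
      _ = (1+a) * (|V| * X) + b * |V| := by ring
      _ ≤ (1+a) * (S/2) + (b/χ) * S := by
          have : (1+a) * (|V| * X) ≤ (1+a) * (S/2) :=
            mul_le_mul_of_nonneg_left hVX (by linarith)
          linarith
      _ = ((1+a)/2 + b/χ) * S := by ring
      _ < l₀ * S := by
          rw [hl₀def]; nlinarith
  refine ⟨goal1, goal2, ?_⟩
  -- third goal
  have hratio : c/2 < (V^2 + X * h t X) / S := goal1
  have h1 : l₀ < (l₀ / (c/2)) * ((V^2 + X * h t X) / S) := by
    have := mul_lt_mul_of_pos_left hratio (div_pos hl₀pos (by positivity) :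
      0 < l₀ / (c/2))
    calc l₀ = (l₀ / (c/2)) * (c/2) := by field_simp
      _ < _ := this
  calc |V * (X - h t X)| / Real.sqrt S < l₀ * Real.sqrt S := goal2
    _ < (l₀ / (c/2)) * ((V^2 + X * h t X) / S) * Real.sqrt S :=
        (mul_lt_mul_of_pos_right h1 hsqrtSpos)
end

section
/- Let 0 < μ₁ ≤ μ₂ be constants and α < β real numbers. Let p : (α,β) → ℝ be measurable with μ₁ ≤ p(t) ≤ μ₂ for almost every t ∈ (α,β), and let v : [α,β] → ℝ be continuous, C¹ on (α,β), belonging to H²_loc(α,β), satisfying v''(t) + p(t)v(t) = 0 for almost every t ∈ (α,β), with v(α) = v(β) = 0 and v(t) > 0 for all t ∈ (α,β). Then π/√μ₂ ≤ β − α ≤ π/√μ₁. -/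
open Real Set MeasureTheory

open intervalIntegral Filter Topology

set_option maxHeartbeats 1600000

lemma intervalIntegrable_of_bdd {f : ℝ → ℝ} {a b M : ℝ} (hf : Measurable f)
    (hM : ∀ t ∈ Set.uIcc a b, |f t| ≤ M) : IntervalIntegrable f volume a b := by
  rw [intervalIntegrable_iff]
  refine Integrable.mono' (g := fun _ => M) (integrableOn_const measure_Ioc_lt_top.ne)
    hf.aestronglyMeasurable ?_
  rw [ae_restrict_iff' measurableSet_uIoc]
  filter_upwards with t ht
  rw [Real.norm_eq_abs]
  exact hM t (uIoc_subset_uIcc ht)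

/-- Fubini for the triangle: swap the order of integration in a primitive. -/
lemma fubini_triangle {g w w' : ℝ → ℝ} {M : ℝ} (hg : Measurable g) (hgM : ∀ t, |g t| ≤ M)
    (hw : ∀ t, HasDerivAt w (w' t) t) (hw'c : Continuous w')
    {a b : ℝ} (hab : a ≤ b) :
    ∫ x in a..b, (∫ t in a..x, g t) * w' x = ∫ t in a..b, g t * (w b - w t) := by
  have hgi : ∀ u v : ℝ, IntervalIntegrable g volume u v := fun u v =>
    intervalIntegrable_of_bdd hg (fun t _ => hgM t)
  set S := Ioc a b with hS
  set F : ℝ → ℝ → ℝ := fun t x => {q : ℝ × ℝ | q.1 ≤ q.2}.indicator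
    (fun q => g q.1 * w' q.2) (t, x) with hF
  have hFint : Integrable (Function.uncurry F)
      ((volume.restrict S).prod (volume.restrict S)) := by
    have h1 : Integrable g (volume.restrict S) := by
      have := (hgi a b); rw [intervalIntegrable_iff, uIoc_of_le hab] at this; exact this
    have h2 : Integrable w' (volume.restrict S) :=
      (hw'c.integrableOn_Ioc : IntegrableOn w' (Ioc a b) volume)
    have hbase : Integrable (fun q : ℝ × ℝ => g q.1 * w' q.2)
        ((volume.restrict S).prod (volume.restrict S)) := h1.mul_prod h2
    have : Function.uncurry F = {q : ℝ × ℝ | q.1 ≤ q.2}.indicator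
        (fun q => g q.1 * w' q.2) := by
      ext q; cases q; rfl
    rw [this]
    exact hbase.indicator (measurableSet_le measurable_fst measurable_snd)
  have hswap := MeasureTheory.integral_integral_swap hFint
  -- hswap : ∫ t in S, ∫ x in S, F t x dx dt = ∫ x in S, ∫ t in S, F t x dt dx
  -- left side
  have hleft : ∀ t ∈ S, (∫ x, F t x ∂(volume.restrict S)) = g t * (w b - w t) := by
    intro t ht
    have hind : (fun x => F t x) = (Ici t).indicator (fun x => g t * w' x) := by
      funext x
      simp only [hF, Set.indicator_apply]
      rfl
    rw [hind, MeasureTheory.integral_indicator measurableSet_Ici,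
      Measure.restrict_restrict measurableSet_Ici]
    have hset : Ici t ∩ S = Icc t b := by
      ext y
      simp only [mem_inter_iff, mem_Ici, hS, mem_Ioc, mem_Icc]
      constructor
      · rintro ⟨h1, _, h3⟩; exact ⟨h1, h3⟩
      · rintro ⟨h1, h2⟩; exact ⟨h1, ht.1.trans_le h1, h2⟩
    rw [hset, MeasureTheory.integral_Icc_eq_integral_Ioc,
      ← intervalIntegral.integral_of_le ht.2, intervalIntegral.integral_const_mul,
      intervalIntegral.integral_eq_sub_of_hasDerivAt (fun x _ => hw x)
      (hw'c.intervalIntegrable _ _)]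
  have hright : ∀ x ∈ S, (∫ t, F t x ∂(volume.restrict S)) = (∫ t in a..x, g t) * w' x := by
    intro x hx
    have hind : (fun t => F t x) = (Iic x).indicator (fun t => g t * w' x) := by
      funext t
      simp only [hF, Set.indicator_apply]
      rfl
    rw [hind, MeasureTheory.integral_indicator measurableSet_Iic,
      Measure.restrict_restrict measurableSet_Iic]
    have hset : Iic x ∩ S = Ioc a x := by
      ext y
      simp only [mem_inter_iff, mem_Iic, hS, mem_Ioc]
      constructor
      · rintro ⟨h1, h2, _⟩; exact ⟨h2, h1⟩
      · rintro ⟨h1, h2⟩; exact ⟨h2, h1, h2.trans hx.2⟩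
    rw [hset, ← intervalIntegral.integral_of_le hx.1.le, intervalIntegral.integral_mul_const]
  calc ∫ x in a..b, (∫ t in a..x, g t) * w' x
      = ∫ x in S, (∫ t in a..x, g t) * w' x := intervalIntegral.integral_of_le hab
    _ = ∫ x in S, ∫ t in S, F t x := by
        refine (setIntegral_congr_fun measurableSet_Ioc ?_).symm
        intro x hx; exact hright x hx
    _ = ∫ t in S, ∫ x in S, F t x := hswap.symm
    _ = ∫ t in S, g t * (w b - w t) := by
        refine setIntegral_congr_fun measurableSet_Ioc ?_
        intro t ht; exact hleft t ht
    _ = ∫ t in a..b, g t * (w b - w t) := (intervalIntegral.integral_of_le hab).symm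

/-- Green / Wronskian identity: if `v' - v' a` is the primitive of `g`, and `w'' = -(m w)`, then
the Wronskian increment equals the comparison integral. -/
lemma green_identity {g v v' w w' : ℝ → ℝ} {m M : ℝ}
    (hg : Measurable g) (hgM : ∀ t, |g t| ≤ M)
    (hw : ∀ t, HasDerivAt w (w' t) t)
    (hw'd : ∀ t, HasDerivAt w' (-(m * w t)) t)
    {a b : ℝ} (hab : a ≤ b)
    (hv : ∀ t ∈ Set.Icc a b, HasDerivAt v (v' t) t)
    (hv'c : ContinuousOn v' (Set.Icc a b))
    (hv'int : ∀ x ∈ Set.Icc a b, v' x - v' a = ∫ t in a..x, g t) :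
    (v b * w' b - v' b * w b) - (v a * w' a - v' a * w a)
      = ∫ t in a..b, (-(m * v t * w t) - g t * w t) := by
  have hgi : ∀ u z : ℝ, IntervalIntegrable g volume u z := fun u z =>
    intervalIntegrable_of_bdd hg (fun t _ => hgM t)
  have hwc : Continuous w := by
    rw [continuous_iff_continuousAt]; exact fun t => (hw t).continuousAt
  have hw'c : Continuous w' := by
    rw [continuous_iff_continuousAt]; exact fun t => (hw'd t).continuousAt
  have hvc : ContinuousOn v (Set.Icc a b) := fun t ht =>
    (hv t ht).continuousAt.continuousWithinAt
  have huIcc : Set.uIcc a b = Set.Icc a b := uIcc_of_le hab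
  -- bound for w on [a, b]
  obtain ⟨Cw, hCw⟩ := (isCompact_Icc (a := a) (b := b)).exists_bound_of_continuousOn
    hwc.continuousOn
  have hgw_int : IntervalIntegrable (fun t => g t * w t) volume a b := by
    refine intervalIntegrable_of_bdd (hg.mul hwc.measurable) (M := M * Cw) ?_
    intro t ht
    rw [huIcc] at ht
    have h1 := hgM t
    have h2 := hCw t ht
    rw [Real.norm_eq_abs] at h2
    have h0 : (0:ℝ) ≤ |g t| := abs_nonneg _
    calc |g t * w t| = |g t| * |w t| := abs_mul _ _
      _ ≤ M * Cw := mul_le_mul h1 h2 (abs_nonneg _) ((abs_nonneg _).trans h1)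
  -- primitive of g
  set G : ℝ → ℝ := fun x => ∫ t in a..x, g t with hG
  have hGc : Continuous G := intervalIntegral.continuous_primitive hgi a
  -- E1
  have E1 : v b * w' b - v a * w' a
      = ∫ t in a..b, (v' t * w' t + v t * (-(m * w t))) := by
    refine (intervalIntegral.integral_eq_sub_of_hasDerivAt (f := fun x => v x * w' x) ?_ ?_).symm
    · intro t ht; rw [huIcc] at ht
      exact (hv t ht).mul (hw'd t)
    · apply ContinuousOn.intervalIntegrable
      rw [huIcc]
      exact (hv'c.mul hw'c.continuousOn).add
        (hvc.mul (continuous_const.mul hwc).neg.continuousOn)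
  -- E2
  have hGb : v' b - v' a = G b := hv'int b ⟨hab, le_rfl⟩
  have hv'w'_int : IntervalIntegrable (fun t => v' t * w' t) volume a b := by
    apply ContinuousOn.intervalIntegrable; rw [huIcc]
    exact hv'c.mul hw'c.continuousOn
  have E2 : v' b * w b - v' a * w a = ∫ t in a..b, (g t * w t + v' t * w' t) := by
    have hsplit : ∫ t in a..b, (g t * w t + v' t * w' t)
        = (∫ t in a..b, g t * w t) + ∫ t in a..b, v' t * w' t :=
      intervalIntegral.integral_add hgw_int hv'w'_int
    have hv'w' : ∫ t in a..b, v' t * w' t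
        = ∫ t in a..b, (v' a * w' t + G t * w' t) := by
      apply intervalIntegral.integral_congr
      intro t ht; rw [huIcc] at ht
      have := hv'int t ht
      have hvt : v' t = v' a + G t := by rw [hG]; linarith [hv'int t ht]
      show v' t * w' t = v' a * w' t + G t * w' t
      rw [hvt]; ring
    have hsplit2 : ∫ t in a..b, (v' a * w' t + G t * w' t)
        = (∫ t in a..b, v' a * w' t) + ∫ t in a..b, G t * w' t := by
      apply intervalIntegral.integral_add
      · exact (continuous_const.mul hw'c).intervalIntegrable _ _
      · exact ((hGc.mul hw'c).intervalIntegrable _ _)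
    have hconst : ∫ t in a..b, v' a * w' t = v' a * (w b - w a) := by
      rw [intervalIntegral.integral_const_mul,
        intervalIntegral.integral_eq_sub_of_hasDerivAt (fun x _ => hw x)
          (hw'c.intervalIntegrable _ _)]
    have hfub : ∫ t in a..b, G t * w' t = ∫ t in a..b, g t * (w b - w t) :=
      fubini_triangle hg hgM hw hw'c hab
    have hsplit3 : ∫ t in a..b, g t * (w b - w t)
        = (∫ t in a..b, g t * w b) - ∫ t in a..b, g t * w t := by
      rw [← intervalIntegral.integral_sub ((hgi a b).mul_const _) hgw_int]
      apply intervalIntegral.integral_congr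
      intro t _; ring
    have hgb : ∫ t in a..b, g t * w b = G b * w b := by
      rw [intervalIntegral.integral_mul_const]
    rw [hsplit, hv'w', hsplit2, hconst, hfub, hsplit3, hgb]
    have : v' b = v' a + G b := by linarith
    rw [this]; ring
  -- combine
  have hcomb : (v b * w' b - v' b * w b) - (v a * w' a - v' a * w a)
      = (v b * w' b - v a * w' a) - (v' b * w b - v' a * w a) := by ring
  rw [hcomb, E1, E2, ← intervalIntegral.integral_sub]
  · apply intervalIntegral.integral_congr
    intro t _; ring
  · apply ContinuousOn.intervalIntegrable
    rw [huIcc]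
    exact (hv'c.mul hw'c.continuousOn).add
      (hvc.mul (continuous_const.mul hwc).neg.continuousOn)
  · exact hgw_int.add hv'w'_int


section helpers

lemma sin_deriv1 (s α : ℝ) (t : ℝ) :
    HasDerivAt (fun t => Real.sin (s * (t - α))) (s * Real.cos (s * (t - α))) t := by
  have hinner : HasDerivAt (fun t : ℝ => s * (t - α)) s t := by
    simpa using ((hasDerivAt_id t).sub_const α).const_mul s
  have := (Real.hasDerivAt_sin (s * (t - α))).comp t hinner
  exact this.congr_deriv (by ring)

lemma sin_deriv2 (s α : ℝ) (t : ℝ) :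
    HasDerivAt (fun t => s * Real.cos (s * (t - α)))
      (-(s * s * Real.sin (s * (t - α)))) t := by
  have hinner : HasDerivAt (fun t : ℝ => s * (t - α)) s t := by
    simpa using ((hasDerivAt_id t).sub_const α).const_mul s
  have := ((Real.hasDerivAt_cos (s * (t - α))).comp t hinner).const_mul s
  exact this.congr_deriv (by ring)

end helpers

theorem statement13
    (μ₁ μ₂ : ℝ) (hμ₁ : 0 < μ₁) (hμ : μ₁ ≤ μ₂)
    (α β : ℝ) (hαβ : α < β)
    (p : ℝ → ℝ) (hp_meas : Measurable p)
    (hp_bounds : ∀ᵐ t ∂(volume.restrict (Ioo α β)), μ₁ ≤ p t ∧ p t ≤ μ₂)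
    (v v' : ℝ → ℝ)
    (hv_cont : ContinuousOn v (Icc α β))
    (hv_deriv : ∀ t ∈ Ioo α β, HasDerivAt v (v' t) t)
    (hv'_cont : ContinuousOn v' (Ioo α β))
    -- v ∈ H²loc and v'' + p v = 0 a.e., in integrated form:
    (hv'' : ∃ v'' : ℝ → ℝ,
      (∀ a ∈ Ioo α β, ∀ b ∈ Ioo α β, v' b - v' a = ∫ t in a..b, v'' t) ∧
      (∀ᵐ t ∂(volume.restrict (Ioo α β)), v'' t + p t * v t = 0))
    (hvα : v α = 0) (hvβ : v β = 0)
    (hv_pos : ∀ t ∈ Ioo α β, 0 < v t) :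
    π / Real.sqrt μ₂ ≤ β - α ∧ β - α ≤ π / Real.sqrt μ₁ := by
  obtain ⟨v'', hv''int, hv''eq⟩ := hv''
  have hμ₂ : 0 < μ₂ := lt_of_lt_of_le hμ₁ hμ
  -- clamped coefficient
  set q : ℝ → ℝ := fun t => min μ₂ (max μ₁ (p t)) with hq
  have hq_meas : Measurable q := measurable_const.min (measurable_const.max hp_meas)
  have hq1 : ∀ t, μ₁ ≤ q t := fun t => le_min hμ (le_max_left _ _)
  have hq2 : ∀ t, q t ≤ μ₂ := fun t => min_le_left _ _
  -- clamped solution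
  set V : ℝ → ℝ := fun t => v (max α (min t β)) with hV
  have hmem : ∀ t : ℝ, max α (min t β) ∈ Icc α β := fun t =>
    ⟨le_max_left _ _, max_le hαβ.le (min_le_right _ _)⟩
  have hVcont : Continuous V := by
    apply hv_cont.comp_continuous
    · exact continuous_const.max (continuous_id.min continuous_const)
    · exact hmem
  have hVeq : ∀ t ∈ Icc α β, V t = v t := by
    intro t ht
    have : max α (min t β) = t := by rw [min_eq_left ht.2, max_eq_right ht.1]
    simp only [hV, this]
  obtain ⟨C, hC⟩ := (isCompact_Icc (a := α) (b := β)).exists_bound_of_continuousOn hv_cont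
  have hVbd : ∀ t, |V t| ≤ C := fun t => by
    rw [← Real.norm_eq_abs]; exact hC _ (hmem t)
  have hC0 : 0 ≤ C := le_trans (abs_nonneg _) (hVbd 0)
  set g : ℝ → ℝ := fun t => -(q t * V t) with hg
  have hg_meas : Measurable g := (hq_meas.mul hVcont.measurable).neg
  have hgM : ∀ t, |g t| ≤ μ₂ * C := by
    intro t
    rw [hg]; simp only [abs_neg, abs_mul]
    exact mul_le_mul (abs_le.2 ⟨by linarith [hq1 t], hq2 t⟩) (hVbd t) (abs_nonneg _) hμ₂.le
  have hgi : ∀ u z : ℝ, IntervalIntegrable g volume u z := fun u z =>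
    intervalIntegrable_of_bdd hg_meas (fun t _ => hgM t)
  -- v'' = g  a.e. on (α,β)
  have hae : ∀ᵐ t ∂volume, t ∈ Ioo α β → v'' t = g t := by
    have h1 := (ae_restrict_iff' measurableSet_Ioo).1 hv''eq
    have h2 := (ae_restrict_iff' measurableSet_Ioo).1 hp_bounds
    filter_upwards [h1, h2] with t ht1 ht2 htmem
    have hb := ht2 htmem
    have hqp : q t = p t := by rw [hq]; simp only; rw [max_eq_right hb.1, min_eq_right hb.2]
    have hVv : V t = v t := hVeq t (Ioo_subset_Icc_self htmem)
    have h3 := ht1 htmem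
    rw [hg]; simp only; rw [hqp, hVv]; linarith
  have hv'int : ∀ u ∈ Ioo α β, ∀ x ∈ Ioo α β, v' x - v' u = ∫ t in u..x, g t := by
    intro u hu x hx
    rw [hv''int u hu x hx]
    apply intervalIntegral.integral_congr_ae
    filter_upwards [hae] with t ht htmem
    apply ht
    have h1 : min u x ≤ t ∧ t ≤ max u x := ⟨htmem.1.le, htmem.2⟩
    exact ⟨(lt_min hu.1 hx.1).trans_le h1.1, h1.2.trans_lt (max_lt hu.2 hx.2)⟩
  -- extension of v' by continuity
  set a₀ : ℝ := (α + β) / 2 with ha₀def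
  have ha₀ : a₀ ∈ Ioo α β := ⟨by simp only [ha₀def]; linarith, by simp only [ha₀def]; linarith⟩
  set G₀ : ℝ → ℝ := fun x => v' a₀ + ∫ t in a₀..x, g t with hG₀
  have hG₀c : Continuous G₀ :=
    continuous_const.add (intervalIntegral.continuous_primitive hgi a₀)
  have hv'G₀ : ∀ x ∈ Ioo α β, v' x = G₀ x := by
    intro x hx
    have := hv'int a₀ ha₀ x hx
    simp only [hG₀]; linarith
  have hneα : (𝓝[Ioo α β] α).NeBot := by
    rw [← mem_closure_iff_nhdsWithin_neBot, closure_Ioo hαβ.ne]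
    exact ⟨le_rfl, hαβ.le⟩
  have hneβ : (𝓝[Ioo α β] β).NeBot := by
    rw [← mem_closure_iff_nhdsWithin_neBot, closure_Ioo hαβ.ne]
    exact ⟨hαβ.le, le_rfl⟩
  have hv'α : Tendsto v' (𝓝[Ioo α β] α) (𝓝 (G₀ α)) := by
    refine ((hG₀c.tendsto α).mono_left nhdsWithin_le_nhds).congr' ?_
    filter_upwards [self_mem_nhdsWithin] with x hx using (hv'G₀ x hx).symm
  have hv'β : Tendsto v' (𝓝[Ioo α β] β) (𝓝 (G₀ β)) := by
    refine ((hG₀c.tendsto β).mono_left nhdsWithin_le_nhds).congr' ?_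
    filter_upwards [self_mem_nhdsWithin] with x hx using (hv'G₀ x hx).symm
  have hvtα : Tendsto v (𝓝[Ioo α β] α) (𝓝 0) := by
    have h := (hv_cont α ⟨le_rfl, hαβ.le⟩).mono_left (nhdsWithin_mono _ Ioo_subset_Icc_self)
    rwa [hvα] at h
  have hvtβ : Tendsto v (𝓝[Ioo α β] β) (𝓝 0) := by
    have h := (hv_cont β ⟨hαβ.le, le_rfl⟩).mono_left (nhdsWithin_mono _ Ioo_subset_Icc_self)
    rwa [hvβ] at h
  constructor
  · by_contra hcon
    push_neg at hcon
    have hβα : 0 < β - α := by linarith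
    have hs₂ : 0 < Real.sqrt μ₂ := Real.sqrt_pos.2 hμ₂
    have hlt : Real.sqrt μ₂ < π / (β - α) := by
      rw [lt_div_iff₀ hβα]
      have h1 := mul_lt_mul_of_pos_right hcon hs₂
      rw [div_mul_cancel₀ _ hs₂.ne'] at h1
      nlinarith
    set s : ℝ := (Real.sqrt μ₂ + π / (β - α)) / 2 with hsdef
    have hs : 0 < s := by
      have : 0 < π / (β - α) := div_pos Real.pi_pos hβα
      simp only [hsdef]; linarith
    have hs_gt : Real.sqrt μ₂ < s := by simp only [hsdef]; linarith
    have hs_lt : s < π / (β - α) := by simp only [hsdef]; linarith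
    set m : ℝ := s * s with hmdef
    have hm : μ₂ < m := by
      have h1 : Real.sqrt μ₂ * Real.sqrt μ₂ < s * s := mul_self_lt_mul_self hs₂.le hs_gt
      rwa [Real.mul_self_sqrt hμ₂.le] at h1
    have hsβ : s * (β - α) < π := (lt_div_iff₀ hβα).1 hs_lt
    set w : ℝ → ℝ := fun t => Real.sin (s * (t - α)) with hwdef
    set w' : ℝ → ℝ := fun t => s * Real.cos (s * (t - α)) with hw'def
    have hw : ∀ t, HasDerivAt w (w' t) t := sin_deriv1 s α
    have hw'd : ∀ t, HasDerivAt w' (-(m * w t)) t := sin_deriv2 s α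
    have hwc : Continuous w := Real.continuous_sin.comp (by fun_prop)
    have hw'c : Continuous w' := continuous_const.mul
      (Real.continuous_cos.comp (by fun_prop))
    have hwpos : ∀ t, α < t → t ≤ β → 0 < w t := by
      intro t h1 h2
      apply Real.sin_pos_of_pos_of_lt_pi
      · have : 0 < t - α := by linarith
        positivity
      · have h3 : s * (t - α) ≤ s * (β - α) := by nlinarith
        linarith
    set c : ℝ := α + (β - α) / 3 with hcdef
    set d : ℝ := α + 2 * (β - α) / 3 with hddef
    have hc : c ∈ Ioo α β := ⟨by simp only [hcdef]; linarith, by simp only [hcdef]; linarith⟩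
    have hd : d ∈ Ioo α β := ⟨by simp only [hddef]; linarith, by simp only [hddef]; linarith⟩
    have hcd : c < d := by simp only [hcdef, hddef]; linarith
    set f₀ : ℝ → ℝ := fun t => (q t - m) * (V t * w t) with hf₀def
    have hf₀meas : Measurable f₀ :=
      (hq_meas.sub measurable_const).mul (hVcont.measurable.mul hwc.measurable)
    have hf₀bd : ∀ t, |f₀ t| ≤ (μ₂ + m) * C := by
      intro t
      have h1 : |q t - m| ≤ μ₂ + m := by
        rw [abs_le]
        constructor
        · have := hq1 t; linarith
        · have := hq2 t; linarith
      have h2 : |V t| * |w t| ≤ C := by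
        calc |V t| * |w t| ≤ C * 1 :=
              mul_le_mul (hVbd t) (abs_le.2 ⟨Real.neg_one_le_sin _, Real.sin_le_one _⟩)
                (abs_nonneg _) hC0
          _ = C := mul_one C
      rw [hf₀def]; simp only [abs_mul]
      exact mul_le_mul h1 h2 (mul_nonneg (abs_nonneg _) (abs_nonneg _)) (by linarith [hμ₂, hm])
    have hf₀int : ∀ u z : ℝ, IntervalIntegrable f₀ volume u z := fun u z =>
      intervalIntegrable_of_bdd hf₀meas (fun t _ => hf₀bd t)
    have hf₀nonpos : ∀ t ∈ Ioo α β, f₀ t ≤ 0 := by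
      intro t ht
      have hVt : V t = v t := hVeq t (Ioo_subset_Icc_self ht)
      apply mul_nonpos_of_nonpos_of_nonneg
      · have := hq2 t; linarith
      · rw [hVt]
        exact mul_nonneg (hv_pos t ht).le (hwpos t ht.1 ht.2.le).le
    set K : ℝ := ∫ t in c..d, f₀ t with hKdef
    have hK : K < 0 := by
      have hvwint : IntervalIntegrable (fun t => V t * w t) volume c d :=
        ((hVcont.mul hwc).intervalIntegrable _ _)
      have hK2 : K ≤ ∫ t in c..d, (μ₂ - m) * (V t * w t) := by
        apply intervalIntegral.integral_mono_on hcd.le (hf₀int c d)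
          (hvwint.const_mul _)
        intro t ht
        have htIoo : t ∈ Ioo α β :=
          ⟨hc.1.trans_le ht.1, lt_of_le_of_lt ht.2 hd.2⟩
        have hVt : V t = v t := hVeq t (Ioo_subset_Icc_self htIoo)
        apply mul_le_mul_of_nonneg_right
        · have := hq2 t; linarith
        · rw [hVt]
          exact mul_nonneg (hv_pos t htIoo).le (hwpos t htIoo.1 htIoo.2.le).le
      have hpos : 0 < ∫ t in c..d, V t * w t := by
        apply intervalIntegral_pos_of_pos_on hvwint _ hcd
        intro t ht
        have htIoo : t ∈ Ioo α β := ⟨hc.1.trans ht.1, ht.2.trans hd.2⟩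
        have hVt : V t = v t := hVeq t (Ioo_subset_Icc_self htIoo)
        rw [hVt]
        exact mul_pos (hv_pos t htIoo) (hwpos t htIoo.1 htIoo.2.le)
      have h3 : ∫ t in c..d, (μ₂ - m) * (V t * w t)
          = (μ₂ - m) * ∫ t in c..d, V t * w t := intervalIntegral.integral_const_mul _ _
      nlinarith
    set W : ℝ → ℝ := fun t => v t * w' t - v' t * w t with hW
    have key : ∀ a ∈ Ioo α β, a ≤ c → ∀ b ∈ Ioo α β, d ≤ b → W b ≤ W a + K := by
      intro a ha hac b hb hdb
      have hab : a ≤ b := by linarith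
      have hIccsub : Icc a b ⊆ Ioo α β := fun y hy =>
        ⟨ha.1.trans_le hy.1, lt_of_le_of_lt hy.2 hb.2⟩
      have hgreen := green_identity hg_meas hgM hw hw'd hab
        (fun t ht => hv_deriv t (hIccsub ht))
        (hv'_cont.mono hIccsub)
        (fun x hx => hv'int a ha x (hIccsub hx))
      have hcongr2 : (∫ t in a..b, (-(m * v t * w t) - g t * w t)) = ∫ t in a..b, f₀ t := by
        apply intervalIntegral.integral_congr
        intro t ht
        rw [uIcc_of_le hab] at ht
        have htIoo : t ∈ Ioo α β := hIccsub ht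
        have hVt : V t = v t := hVeq t (Ioo_subset_Icc_self htIoo)
        show -(m * v t * w t) - g t * w t = (q t - m) * (V t * w t)
        simp only [hg]; rw [hVt]; ring
      rw [hcongr2] at hgreen
      have e1 := intervalIntegral.integral_add_adjacent_intervals (hf₀int a c) (hf₀int c b)
      have e2 := intervalIntegral.integral_add_adjacent_intervals (hf₀int c d) (hf₀int d b)
      have h1 : ∫ t in a..c, f₀ t ≤ 0 := by
        have h := intervalIntegral.integral_nonneg (μ := volume) (f := fun t => -f₀ t) hac
          (fun u hu => neg_nonneg.2 (hf₀nonpos u ⟨ha.1.trans_le hu.1, lt_of_le_of_lt hu.2 hc.2⟩))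
        rw [intervalIntegral.integral_neg] at h; linarith
      have h3 : ∫ t in d..b, f₀ t ≤ 0 := by
        have h := intervalIntegral.integral_nonneg (μ := volume) (f := fun t => -f₀ t) hdb
          (fun u hu => neg_nonneg.2 (hf₀nonpos u ⟨hd.1.trans_le hu.1, lt_of_le_of_lt hu.2 hb.2⟩))
        rw [intervalIntegral.integral_neg] at h; linarith
      simp only [hW]
      linarith
    have hwα : w α = 0 := by simp [hwdef]
    have hWtendα : Tendsto W (𝓝[Ioo α β] α) (𝓝 0) := by
      have h1 : Tendsto w' (𝓝[Ioo α β] α) (𝓝 (w' α)) :=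
        (hw'c.tendsto α).mono_left nhdsWithin_le_nhds
      have h2 : Tendsto w (𝓝[Ioo α β] α) (𝓝 (w α)) :=
        (hwc.tendsto α).mono_left nhdsWithin_le_nhds
      have h3 := (hvtα.mul h1).sub (hv'α.mul h2)
      have h4 : (0 : ℝ) * w' α - G₀ α * w α = 0 := by rw [hwα]; ring
      rwa [h4] at h3
    have hWtendβ : Tendsto W (𝓝[Ioo α β] β) (𝓝 (-(G₀ β * w β))) := by
      have h1 : Tendsto w' (𝓝[Ioo α β] β) (𝓝 (w' β)) :=
        (hw'c.tendsto β).mono_left nhdsWithin_le_nhds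
      have h2 : Tendsto w (𝓝[Ioo α β] β) (𝓝 (w β)) :=
        (hwc.tendsto β).mono_left nhdsWithin_le_nhds
      have h3 := (hvtβ.mul h1).sub (hv'β.mul h2)
      have h4 : (0 : ℝ) * w' β - G₀ β * w β = -(G₀ β * w β) := by ring
      rwa [h4] at h3
    have step1 : ∀ a ∈ Ioo α β, a ≤ c → -(G₀ β * w β) ≤ W a + K := by
      intro a ha hac
      apply le_of_tendsto hWtendβ
      have hevd : ∀ᶠ b in 𝓝[Ioo α β] β, d < b :=
        (lt_mem_nhds hd.2).filter_mono nhdsWithin_le_nhds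
      filter_upwards [hevd, self_mem_nhdsWithin] with b h1 h2 using key a ha hac b h2 h1.le
    have step2 : -(G₀ β * w β) ≤ K := by
      have htendaK : Tendsto (fun a => W a + K) (𝓝[Ioo α β] α) (𝓝 (0 + K)) :=
        hWtendα.add tendsto_const_nhds
      have hev : ∀ᶠ a in 𝓝[Ioo α β] α, -(G₀ β * w β) ≤ W a + K := by
        have hevc : ∀ᶠ a in 𝓝[Ioo α β] α, a < c :=
          (gt_mem_nhds hc.1).filter_mono nhdsWithin_le_nhds
        filter_upwards [hevc, self_mem_nhdsWithin] with a h1 h2 using step1 a h2 h1.le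
      have h := ge_of_tendsto htendaK hev
      linarith
    have hwβ : 0 < w β := hwpos β hαβ le_rfl
    have hL : 0 < G₀ β := by
      by_contra hLn
      push_neg at hLn
      have : G₀ β * w β ≤ 0 := mul_nonpos_of_nonpos_of_nonneg hLn hwβ.le
      linarith
    -- MVT contradiction: v' would be positive near β but the slope is negative
    have hev' : ∀ᶠ x in 𝓝[Ioo α β] β, 0 < v' x := hv'β.eventually (eventually_gt_nhds hL)
    rw [eventually_nhdsWithin_iff] at hev'
    obtain ⟨ε, hε, hball⟩ := Metric.eventually_nhds_iff.1 hev'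
    set b : ℝ := max (β - ε / 2) ((α + β) / 2) with hbdef
    have hbβ : b < β := max_lt (by linarith) (by linarith)
    have hbα : α < b := lt_of_lt_of_le (by linarith : α < (α + β) / 2) (le_max_right _ _)
    obtain ⟨ξ, hξ, hslope⟩ := exists_hasDerivAt_eq_slope v v' hbβ
      (hv_cont.mono (Icc_subset_Icc hbα.le le_rfl))
      (fun x hx => hv_deriv x ⟨hbα.trans hx.1, hx.2⟩)
    have hvb : 0 < v b := hv_pos b ⟨hbα, hbβ⟩
    have hneg : v' ξ < 0 := by
      rw [hslope, hvβ]
      apply div_neg_of_neg_of_pos <;> linarith [hξ.1, hξ.2]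
    have hdist : dist ξ β < ε := by
      rw [Real.dist_eq, abs_lt]
      have hbge : β - ε / 2 ≤ b := le_max_left (β - ε / 2) ((α + β) / 2)
      constructor <;> linarith [hξ.1, hξ.2]
    have hpos' : 0 < v' ξ := hball hdist ⟨hbα.trans hξ.1, hξ.2⟩
    linarith
  · by_contra hcon
    push_neg at hcon
    set s := Real.sqrt μ₁ with hsdef
    have hs : 0 < s := Real.sqrt_pos.2 hμ₁
    have hss : s * s = μ₁ := Real.mul_self_sqrt hμ₁.le
    set w : ℝ → ℝ := fun t => Real.sin (s * (t - α)) with hwdef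
    set w' : ℝ → ℝ := fun t => s * Real.cos (s * (t - α)) with hw'def
    have hw : ∀ t, HasDerivAt w (w' t) t := sin_deriv1 s α
    have hw'd : ∀ t, HasDerivAt w' (-(μ₁ * w t)) t := by
      intro t
      have := sin_deriv2 s α t
      rwa [hss] at this
    have hwc : Continuous w := Real.continuous_sin.comp (by fun_prop)
    have hw'c : Continuous w' := continuous_const.mul
      (Real.continuous_cos.comp (by fun_prop))
    set γ : ℝ := α + π / s with hγdef
    have hγ : γ ∈ Ioo α β := by
      constructor
      · simp only [hγdef]
        have : 0 < π / s := div_pos Real.pi_pos hs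
        linarith
      · simp only [hγdef]
        have : π / s < β - α := hcon
        linarith
    set W : ℝ → ℝ := fun t => v t * w' t - v' t * w t with hW
    have key : ∀ a ∈ Ioo α β, a < γ → W a ≤ W γ := by
      intro a ha haγ
      have haγle : a ≤ γ := haγ.le
      have hIccsub : Icc a γ ⊆ Ioo α β := fun y hy =>
        ⟨ha.1.trans_le hy.1, lt_of_le_of_lt hy.2 hγ.2⟩
      have hgreen := green_identity hg_meas hgM hw hw'd haγle
        (fun t ht => hv_deriv t (hIccsub ht))
        (hv'_cont.mono hIccsub)
        (fun x hx => hv'int a ha x (hIccsub hx))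
      have hnn : 0 ≤ ∫ t in a..γ, (-(μ₁ * v t * w t) - g t * w t) := by
        apply intervalIntegral.integral_nonneg haγle
        intro u hu
        have huIoo : u ∈ Ioo α β := hIccsub hu
        have hVu : V u = v u := hVeq u (Ioo_subset_Icc_self huIoo)
        have hsπ : s * (π / s) = π := by field_simp
        have hwu : 0 ≤ w u := by
          apply Real.sin_nonneg_of_nonneg_of_le_pi
          · have : α ≤ u := huIoo.1.le
            nlinarith
          · have h1 : u - α ≤ π / s := by
              have := hu.2; simp only [hγdef] at this; linarith
            calc s * (u - α) ≤ s * (π / s) := by nlinarith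
              _ = π := hsπ
        have heq : -(μ₁ * v u * w u) - g u * w u = (q u - μ₁) * (v u * w u) := by
          simp only [hg]; rw [hVu]; ring
        rw [heq]
        exact mul_nonneg (by linarith [hq1 u]) (mul_nonneg (hv_pos u huIoo).le hwu)
      simp only [hW]; linarith
    have hwα : w α = 0 := by simp [hwdef]
    have hWtend : Tendsto W (𝓝[Ioo α β] α) (𝓝 0) := by
      have h1 : Tendsto w' (𝓝[Ioo α β] α) (𝓝 (w' α)) :=
        (hw'c.tendsto α).mono_left nhdsWithin_le_nhds
      have h2 : Tendsto w (𝓝[Ioo α β] α) (𝓝 (w α)) :=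
        (hwc.tendsto α).mono_left nhdsWithin_le_nhds
      have h3 := (hvtα.mul h1).sub (hv'α.mul h2)
      have h4 : (0 : ℝ) * w' α - G₀ α * w α = 0 := by rw [hwα]; ring
      rwa [h4] at h3
    have hev : ∀ᶠ a in 𝓝[Ioo α β] α, W a ≤ W γ := by
      have hevγ : ∀ᶠ a in 𝓝[Ioo α β] α, a < γ :=
        (gt_mem_nhds hγ.1).filter_mono nhdsWithin_le_nhds
      filter_upwards [hevγ, self_mem_nhdsWithin] with a h1 h2 using key a h2 h1
    have h0le : (0 : ℝ) ≤ W γ := le_of_tendsto hWtend hev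
    have hsπ : s * (π / s) = π := by field_simp
    have hγα : γ - α = π / s := by simp [hγdef]
    have hwγ : w γ = 0 := by
      simp only [hwdef]; rw [hγα, hsπ, Real.sin_pi]
    have hw'γ : w' γ = -s := by
      simp only [hw'def]; rw [hγα, hsπ, Real.cos_pi]; ring
    have hvγ := hv_pos γ hγ
    simp only [hW] at h0le
    rw [hwγ, hw'γ] at h0le
    nlinarith
end

section
/- Let 0 < μ₁ ≤ μ₂ be constants and α < β real numbers with β − α = π/√μ₂. Let p : (α,β) → ℝ be measurable with μ₁ ≤ p(t) ≤ μ₂ for almost every t ∈ (α,β), and let v : [α,β] → ℝ be continuous, C¹ on (α,β), belonging to H²_loc(α,β), satisfying v''(t) + p(t)v(t) = 0 for almost every t ∈ (α,β), with v(α) = v(β) = 0 and v(t) > 0 for all t ∈ (α,β). Then p(t) = μ₂ for almost every t ∈ (α,β), and there exists a constant c > 0 such that v(t) = c·sin(√μ₂·(t − α)) for every t ∈ [α,β]. -/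
open Real Set MeasureTheory

lemma fubini_aux (q W : ℝ → ℝ) (hq : Measurable q) (M N : ℝ) (hqb : ∀ t, |q t| ≤ M)
    (hW : Continuous W) (hWb : ∀ t, |W t| ≤ N) (a b : ℝ) (hab : a ≤ b) :
    ∫ t in a..b, (∫ s in a..t, q s) * W t = ∫ s in a..b, q s * (∫ t in s..b, W t) := by
  have hM : 0 ≤ M := le_trans (abs_nonneg _) (hqb 0)
  have hN : 0 ≤ N := le_trans (abs_nonneg _) (hWb 0)
  set μab := volume.restrict (Ioc a b) with hμab
  haveI : IsFiniteMeasure μab := by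
    constructor
    rw [hμab, Measure.restrict_apply_univ, Real.volume_Ioc]
    exact ENNReal.ofReal_lt_top
  set F : ℝ × ℝ → ℝ := fun z => if z.1 ≤ z.2 then q z.1 * W z.2 else 0 with hF
  have hF_meas : Measurable F :=
    Measurable.ite (measurableSet_le measurable_fst measurable_snd)
      ((hq.comp measurable_fst).mul (hW.measurable.comp measurable_snd)) measurable_const
  have hF_bound : ∀ z, ‖F z‖ ≤ M * N := by
    intro z
    rw [hF]
    dsimp only
    split_ifs
    · rw [Real.norm_eq_abs, abs_mul]
      exact mul_le_mul (hqb _) (hWb _) (abs_nonneg _) hM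
    · simpa using mul_nonneg hM hN
  have hF_int : Integrable F (μab.prod μab) :=
    Integrable.mono' (integrable_const (M * N)) hF_meas.aestronglyMeasurable
      (Filter.Eventually.of_forall hF_bound)
  have swap : ∫ t, ∫ s, F (s, t) ∂μab ∂μab = ∫ s, ∫ t, F (s, t) ∂μab ∂μab := by
    have := MeasureTheory.integral_integral_swap (f := fun s t => F (s, t)) (μ := μab) (ν := μab)
      (by exact hF_int)
    exact this.symm
  calc ∫ t in a..b, (∫ s in a..t, q s) * W t
      = ∫ t in Ioc a b, (∫ s in Ioc a t, q s) * W t := by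
        rw [intervalIntegral.integral_of_le hab]
        refine setIntegral_congr_fun measurableSet_Ioc (fun t ht => ?_)
        rw [intervalIntegral.integral_of_le ht.1.le]
    _ = ∫ t, ∫ s, F (s, t) ∂μab ∂μab := by
        refine setIntegral_congr_fun measurableSet_Ioc (fun t ht => ?_)
        have h1 : ∀ s : ℝ, F (s, t) = (Iic t).indicator (fun s => q s * W t) s := by
          intro s
          rw [hF]
          by_cases h : s ≤ t
          · simp [h]
          · simp [h]
        calc (∫ s in Ioc a t, q s) * W t
            = ∫ s in Ioc a t, q s * W t := by rw [← integral_mul_const]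
          _ = ∫ s in Ioc a b ∩ Iic t, q s * W t := by
              rw [Set.Ioc_inter_Iic, min_eq_right ht.2]
          _ = ∫ s in Ioc a b, (Iic t).indicator (fun s => q s * W t) s := by
              rw [setIntegral_indicator measurableSet_Iic]
          _ = ∫ s, F (s, t) ∂μab := by
              rw [hμab]; exact setIntegral_congr_fun measurableSet_Ioc (fun s _ => (h1 s).symm)
    _ = ∫ s, ∫ t, F (s, t) ∂μab ∂μab := swap
    _ = ∫ s in Ioc a b, q s * (∫ t in s..b, W t) := by
        rw [hμab]
        refine setIntegral_congr_fun measurableSet_Ioc (fun s hs => ?_)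
        have h1 : ∀ t : ℝ, F (s, t) = (Ici s).indicator (fun t => q s * W t) t := by
          intro t
          rw [hF]
          by_cases h : s ≤ t
          · simp [h]
          · simp [h]
        have h2 : Ioc a b ∩ Ici s = Icc s b := by
          ext t
          simp only [mem_inter_iff, mem_Ioc, mem_Ici, mem_Icc]
          constructor
          · rintro ⟨⟨_, h2⟩, h3⟩; exact ⟨h3, h2⟩
          · rintro ⟨h1', h2'⟩; exact ⟨⟨lt_of_lt_of_le hs.1 h1', h2'⟩, h1'⟩
        calc ∫ t, F (s, t) ∂μab
            = ∫ t in Ioc a b, (Ici s).indicator (fun t => q s * W t) t := by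
              rw [hμab]; exact setIntegral_congr_fun measurableSet_Ioc (fun t _ => h1 t)
          _ = ∫ t in Ioc a b ∩ Ici s, q s * W t := setIntegral_indicator measurableSet_Ici
          _ = ∫ t in Icc s b, q s * W t := by rw [h2]
          _ = ∫ t in Ioc s b, q s * W t := integral_Icc_eq_integral_Ioc
          _ = q s * ∫ t in Ioc s b, W t := integral_const_mul _ _
          _ = q s * ∫ t in s..b, W t := by rw [intervalIntegral.integral_of_le hs.2]
    _ = ∫ s in a..b, q s * (∫ t in s..b, W t) := (intervalIntegral.integral_of_le hab).symm

lemma bdd_intervalIntegrable (f : ℝ → ℝ) (hf : Measurable f) (M : ℝ) (hb : ∀ t, |f t| ≤ M)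
    (a b : ℝ) : IntervalIntegrable f volume a b := by
  refine intervalIntegrable_iff.mpr ?_
  haveI : IsFiniteMeasure (volume.restrict (Set.uIoc a b)) := by
    constructor
    rw [Measure.restrict_apply_univ, Set.uIoc, Real.volume_Ioc]
    exact ENNReal.ofReal_lt_top
  exact Integrable.mono' (integrable_const M) hf.aestronglyMeasurable
    (Filter.Eventually.of_forall (fun t => by rw [Real.norm_eq_abs]; exact hb t))

set_option maxHeartbeats 1600000 in
theorem statement14
    (μ₁ μ₂ : ℝ) (hμ₁ : 0 < μ₁) (hμ : μ₁ ≤ μ₂)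
    (α β : ℝ) (hαβ : α < β) (hlen : β - α = π / Real.sqrt μ₂)
    (p : ℝ → ℝ) (hp_meas : Measurable p)
    (hp_bounds : ∀ᵐ t ∂(volume.restrict (Ioo α β)), μ₁ ≤ p t ∧ p t ≤ μ₂)
    (v v' : ℝ → ℝ)
    (hv_cont : ContinuousOn v (Icc α β))
    (hv_deriv : ∀ t ∈ Ioo α β, HasDerivAt v (v' t) t)
    (hv'_cont : ContinuousOn v' (Ioo α β))
    -- v ∈ H²loc and v'' + p v = 0 a.e., in integrated form:
    (hv'' : ∃ v'' : ℝ → ℝ,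
      (∀ a ∈ Ioo α β, ∀ b ∈ Ioo α β, v' b - v' a = ∫ t in a..b, v'' t) ∧
      (∀ᵐ t ∂(volume.restrict (Ioo α β)), v'' t + p t * v t = 0))
    (hvα : v α = 0) (hvβ : v β = 0)
    (hv_pos : ∀ t ∈ Ioo α β, 0 < v t) :
    (∀ᵐ t ∂(volume.restrict (Ioo α β)), p t = μ₂) ∧
    ∃ c : ℝ, 0 < c ∧ ∀ t ∈ Icc α β, v t = c * Real.sin (Real.sqrt μ₂ * (t - α)) := by
  have hμ₂ : 0 < μ₂ := lt_of_lt_of_le hμ₁ hμ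
  set σ := Real.sqrt μ₂ with hσdef
  have hσ : 0 < σ := Real.sqrt_pos.mpr hμ₂
  have hσ2 : σ * σ = μ₂ := Real.mul_self_sqrt hμ₂.le
  have hπ : σ * (β - α) = π := by rw [hlen]; field_simp
  -- clamp of v
  set cl : ℝ → ℝ := fun t => max α (min t β) with hcl
  have hcl_cont : Continuous cl := continuous_const.max (continuous_id.min continuous_const)
  have hcl_mem : ∀ t, cl t ∈ Icc α β := fun t =>
    ⟨le_max_left _ _, max_le hαβ.le (min_le_right _ _)⟩
  set vm : ℝ → ℝ := fun t => v (cl t) with hvmdef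
  have hvm_cont : Continuous vm := hv_cont.comp_continuous hcl_cont hcl_mem
  have hvm_eq : ∀ t ∈ Icc α β, vm t = v t := by
    intro t ht
    have : cl t = t := by
      rw [hcl]; dsimp only; rw [min_eq_left ht.2, max_eq_right ht.1]
    rw [hvmdef]; dsimp only; rw [this]
  obtain ⟨C, hC⟩ := isCompact_Icc.exists_bound_of_continuousOn hv_cont
  have hvmC : ∀ t, |vm t| ≤ C := fun t => hC _ (hcl_mem t)
  have hC0 : 0 ≤ C := le_trans (abs_nonneg _) (hvmC α)
  -- clamp of p
  set P : ℝ → ℝ := fun t => max μ₁ (min (p t) μ₂) with hPdef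
  have hP_meas : Measurable P := measurable_const.max ((hp_meas.min measurable_const))
  have hP1 : ∀ t, μ₁ ≤ P t := fun t => le_max_left _ _
  have hP2 : ∀ t, P t ≤ μ₂ := fun t => max_le hμ (min_le_right _ _)
  set q : ℝ → ℝ := fun t => -(P t * vm t) with hqdef
  have hq_meas : Measurable q := (hP_meas.mul hvm_cont.measurable).neg
  have hqC : ∀ t, |q t| ≤ μ₂ * C := by
    intro t
    rw [hqdef]; dsimp only
    rw [abs_neg, abs_mul]
    refine mul_le_mul ?_ (hvmC t) (abs_nonneg _) hμ₂.le
    rw [abs_of_pos (lt_of_lt_of_le hμ₁ (hP1 t))]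
    exact hP2 t
  -- sine and its derivative
  set sw : ℝ → ℝ := fun t => Real.sin (σ * (t - α)) with hswdef
  set swd : ℝ → ℝ := fun t => σ * Real.cos (σ * (t - α)) with hswddef
  have hlin : ∀ t : ℝ, HasDerivAt (fun t => σ * (t - α)) σ t := by
    intro t
    simpa using ((hasDerivAt_id t).sub_const α).const_mul σ
  have hsw : ∀ t, HasDerivAt sw (swd t) t := by
    intro t
    have := (Real.hasDerivAt_sin (σ * (t - α))).comp t (hlin t)
    simpa [hswdef, hswddef, mul_comm, Function.comp_def] using this
  have hswd : ∀ t, HasDerivAt swd (-(μ₂ * sw t)) t := by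
    intro t
    have h1 := ((Real.hasDerivAt_cos (σ * (t - α))).comp t (hlin t)).const_mul σ
    have : σ * (-Real.sin (σ * (t - α)) * σ) = -(μ₂ * sw t) := by
      rw [hswdef]; dsimp only; rw [← hσ2]; ring
    rw [this] at h1
    exact h1
  have hsw_cont : Continuous sw := by
    rw [hswdef]; fun_prop
  have hswd_cont : Continuous swd := by
    rw [hswddef]; fun_prop
  have hswb : ∀ t, |sw t| ≤ 1 := fun t => Real.abs_sin_le_one _
  have hswdb : ∀ t, |swd t| ≤ σ := by
    intro t
    rw [hswddef]; dsimp only; rw [abs_mul, abs_of_pos hσ]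
    nlinarith [Real.abs_cos_le_one (σ * (t - α)), hσ]
  have hsw_pos : ∀ t ∈ Ioo α β, 0 < sw t := by
    intro t ht
    refine Real.sin_pos_of_pos_of_lt_pi (by nlinarith [ht.1]) ?_
    rw [← hπ]
    nlinarith [ht.2]
  have hswα : sw α = 0 := by rw [hswdef]; simp
  have hswβ : sw β = 0 := by rw [hswdef]; dsimp only; rw [hπ]; exact Real.sin_pi
  -- subinterval facts
  have husub : ∀ {a b : ℝ}, a ∈ Ioo α β → b ∈ Ioo α β → uIcc a b ⊆ Ioo α β := by
    intro a b ha hb t ht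
    rw [Set.uIcc, Set.mem_Icc] at ht
    exact ⟨lt_of_lt_of_le (lt_min ha.1 hb.1) ht.1, lt_of_le_of_lt ht.2 (max_lt ha.2 hb.2)⟩
  obtain ⟨v'', hv''rep, hode⟩ := hv''
  have hae : ∀ᵐ t ∂(volume.restrict (Ioo α β)), v'' t = q t := by
    filter_upwards [hode, hp_bounds, ae_restrict_mem measurableSet_Ioo] with t h1 h2 h3
    have hPt : P t = p t := by
      rw [hPdef]; dsimp only; rw [min_eq_left h2.2, max_eq_right h2.1]
    have hvmt : vm t = v t := hvm_eq t (Ioo_subset_Icc_self h3)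
    rw [hqdef]; dsimp only; rw [hPt, hvmt]; linarith
  have hae' : ∀ᵐ t ∂(volume : Measure ℝ), t ∈ Ioo α β → v'' t = q t :=
    (ae_restrict_iff' measurableSet_Ioo).mp hae
  have hrep : ∀ a ∈ Ioo α β, ∀ b ∈ Ioo α β, v' b - v' a = ∫ t in a..b, q t := by
    intro a ha b hb
    rw [hv''rep a ha b hb]
    refine intervalIntegral.integral_congr_ae ?_
    filter_upwards [hae'] with t h1 h2
    exact h1 (husub ha hb (uIoc_subset_uIcc h2))
  have hq_int : ∀ a b : ℝ, IntervalIntegrable q volume a b :=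
    bdd_intervalIntegrable q hq_meas (μ₂ * C) hqC
  have hqsw_int : ∀ a b : ℝ, IntervalIntegrable (fun t => q t * sw t) volume a b := by
    refine bdd_intervalIntegrable _ (hq_meas.mul hsw_cont.measurable) (μ₂ * C) (fun t => ?_)
    rw [abs_mul]
    calc |q t| * |sw t| ≤ (μ₂ * C) * 1 :=
          mul_le_mul (hqC t) (hswb t) (abs_nonneg _) (by positivity)
      _ = μ₂ * C := mul_one _
  have hintswd : ∀ s t : ℝ, ∫ u in s..t, swd u = sw t - sw s := fun s t =>
    intervalIntegral.integral_eq_sub_of_hasDerivAt (fun u _ => hsw u)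
      (hswd_cont.intervalIntegrable _ _)
  -- Step A : integration by parts for v' against sw
  have stepA : ∀ a ∈ Ioo α β, ∀ b ∈ Ioo α β, a ≤ b →
      v' b * sw b - v' a * sw a = ∫ t in a..b, (q t * sw t + v' t * swd t) := by
    intro a ha b hb hab
    have hsubI := husub ha hb
    have hkey : ∀ t ∈ uIcc a b, v' t = v' a + ∫ s in a..t, q s := by
      intro t ht
      have := hrep a ha t (hsubI ht)
      linarith
    have hv'c : ContinuousOn v' (uIcc a b) := hv'_cont.mono hsubI
    have hv'swd_int : IntervalIntegrable (fun t => v' t * swd t) volume a b :=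
      (hv'c.mul hswd_cont.continuousOn).intervalIntegrable
    rw [intervalIntegral.integral_add (hqsw_int a b) hv'swd_int]
    have cont_prim : ContinuousOn (fun t => ∫ s in a..t, q s) (uIcc a b) :=
      ContinuousOn.congr (hv'c.sub (continuousOn_const : ContinuousOn (fun _ => v' a) _))
        (fun t ht => by simp only [Pi.sub_apply]; rw [hkey t ht]; ring)
    have e1 : ∫ t in a..b, v' t * swd t
        = ∫ t in a..b, (v' a * swd t + (∫ s in a..t, q s) * swd t) :=
      intervalIntegral.integral_congr (fun t ht => by rw [hkey t ht]; ring)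
    have i1 : IntervalIntegrable (fun t => v' a * swd t) volume a b :=
      (continuous_const.mul hswd_cont).intervalIntegrable _ _
    have i2 : IntervalIntegrable (fun t => (∫ s in a..t, q s) * swd t) volume a b :=
      (cont_prim.mul hswd_cont.continuousOn).intervalIntegrable
    rw [e1, intervalIntegral.integral_add i1 i2,
      intervalIntegral.integral_const_mul, hintswd a b,
      fubini_aux q swd hq_meas (μ₂ * C) σ hqC hswd_cont hswdb a b hab]
    have e2 : ∫ s in a..b, q s * (∫ t in s..b, swd t)
        = (v' b - v' a) * sw b - ∫ s in a..b, q s * sw s := by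
      have e3 : ∀ s ∈ uIcc a b, q s * (∫ t in s..b, swd t) = q s * sw b - q s * sw s := by
        intro s hs
        rw [hintswd s b]; ring
      rw [intervalIntegral.integral_congr e3,
        intervalIntegral.integral_sub (by
          simpa using (hq_int a b).mul_const (sw b)) (hqsw_int a b),
        intervalIntegral.integral_mul_const, ← hrep a ha b hb]
    rw [e2]
    ring
  -- Step B : FTC for v against swd
  have stepB : ∀ a ∈ Ioo α β, ∀ b ∈ Ioo α β,
      v b * swd b - v a * swd a = ∫ t in a..b, (v' t * swd t + v t * -(μ₂ * sw t)) := by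
    intro a ha b hb
    have hsubI := husub ha hb
    have hvc : ContinuousOn v (uIcc a b) :=
      hv_cont.mono (fun t ht => Ioo_subset_Icc_self (hsubI ht))
    refine (intervalIntegral.integral_eq_sub_of_hasDerivAt
      (fun t ht => (hv_deriv t (hsubI ht)).mul (hswd t)) ?_).symm
    exact (((hv'_cont.mono hsubI).mul hswd_cont.continuousOn).add
      (hvc.mul ((continuous_const.mul hsw_cont).neg.continuousOn))).intervalIntegrable
  -- Step C
  set K : ℝ → ℝ := fun t => (μ₂ - P t) * (vm t * sw t) with hKdef
  set WF : ℝ → ℝ := fun t => v' t * sw t - v t * swd t with hWFdef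
  have stepC : ∀ a ∈ Ioo α β, ∀ b ∈ Ioo α β, a ≤ b →
      WF b - WF a = ∫ t in a..b, K t := by
    intro a ha b hb hab
    have hsubI := husub ha hb
    have hA := stepA a ha b hb hab
    have hB := stepB a ha b hb
    have hvc : ContinuousOn v (uIcc a b) :=
      hv_cont.mono (fun t ht => Ioo_subset_Icc_self (hsubI ht))
    have hv'c : ContinuousOn v' (uIcc a b) := hv'_cont.mono hsubI
    have i1 : IntervalIntegrable (fun t => q t * sw t + v' t * swd t) volume a b :=
      (hqsw_int a b).add ((hv'c.mul hswd_cont.continuousOn).intervalIntegrable)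
    have i2 : IntervalIntegrable (fun t => v' t * swd t + v t * -(μ₂ * sw t)) volume a b :=
      ((hv'c.mul hswd_cont.continuousOn).add
        (hvc.mul ((continuous_const.mul hsw_cont).neg.continuousOn))).intervalIntegrable
    have e1 : WF b - WF a
        = (∫ t in a..b, (q t * sw t + v' t * swd t))
          - ∫ t in a..b, (v' t * swd t + v t * -(μ₂ * sw t)) := by
      rw [← hA, ← hB, hWFdef]; ring
    rw [e1, ← intervalIntegral.integral_sub i1 i2]
    refine intervalIntegral.integral_congr (fun t ht => ?_)
    have hvmt : vm t = v t := hvm_eq t (Ioo_subset_Icc_self (hsubI ht))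
    rw [hKdef, hqdef]; dsimp only; rw [hvmt]; ring
  -- bound on v' near endpoints
  set t₀ : ℝ := (α + β) / 2 with ht₀def
  have ht₀ : t₀ ∈ Ioo α β := ⟨by rw [ht₀def]; linarith, by rw [ht₀def]; linarith⟩
  set B : ℝ := |v' t₀| + μ₂ * C * (β - α) with hBdef
  have hv'B : ∀ t ∈ Ioo α β, |v' t| ≤ B := by
    intro t ht
    have h1 : v' t - v' t₀ = ∫ s in t₀..t, q s := hrep t₀ ht₀ t ht
    have h2 : |v' t - v' t₀| ≤ μ₂ * C * |t - t₀| := by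
      rw [h1]
      have := intervalIntegral.norm_integral_le_of_norm_le_const
        (C := μ₂ * C) (f := q) (a := t₀) (b := t) (fun x _ => by
          rw [Real.norm_eq_abs]; exact hqC x)
      simpa [Real.norm_eq_abs] using this
    have h3 : |t - t₀| ≤ β - α := by
      rw [abs_sub_le_iff]
      constructor <;> [skip; skip] <;>
        (first | (have := ht.1; have := ht.2; have := ht₀.1; have := ht₀.2; linarith))
    have h4 : μ₂ * C * |t - t₀| ≤ μ₂ * C * (β - α) :=
      mul_le_mul_of_nonneg_left h3 (by positivity)
    calc |v' t| ≤ |v' t₀| + |v' t - v' t₀| := by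
          have := abs_sub_abs_le_abs_sub (v' t) (v' t₀); linarith [abs_nonneg (v' t - v' t₀)]
      _ ≤ B := by rw [hBdef]; linarith
  have hB0 : 0 ≤ B := by
    rw [hBdef]
    nlinarith [abs_nonneg (v' t₀), mul_nonneg (mul_nonneg hμ₂.le hC0) (sub_pos.mpr hαβ).le]
  -- limits of WF at the endpoints
  have hlim : ∀ γ ∈ ({α, β} : Set ℝ), sw γ = 0 → v γ = 0 →
      Filter.Tendsto WF (nhdsWithin γ (Ioo α β)) (nhds 0) := by
    intro γ _ hswγ hvγ
    have h1 : Filter.Tendsto (fun t => v t * swd t) (nhdsWithin γ (Ioo α β)) (nhds 0) := by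
      have hvten : Filter.Tendsto v (nhdsWithin γ (Ioo α β)) (nhds (v γ)) := by
        refine ContinuousWithinAt.tendsto ?_
        refine (hv_cont γ ?_).mono Ioo_subset_Icc_self
        rcases ‹γ ∈ ({α, β} : Set ℝ)› with h | h
        · rw [h]; exact ⟨le_refl _, hαβ.le⟩
        · rw [h]; exact ⟨hαβ.le, le_refl _⟩
      have := hvten.mul (hswd_cont.continuousWithinAt (s := Ioo α β) (x := γ)).tendsto
      rw [hvγ, zero_mul] at this
      exact this
    have h2 : Filter.Tendsto (fun t => v' t * sw t) (nhdsWithin γ (Ioo α β)) (nhds 0) := by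
      refine squeeze_zero_norm' (a := fun t => B * |sw t|) ?_ ?_
      · filter_upwards [self_mem_nhdsWithin] with t ht
        rw [Real.norm_eq_abs, abs_mul]
        exact mul_le_mul_of_nonneg_right (hv'B t ht) (abs_nonneg _)
      · have : Filter.Tendsto (fun t => B * |sw t|) (nhdsWithin γ (Ioo α β))
            (nhds (B * |sw γ|)) :=
          ((continuous_const.mul (hsw_cont.abs)).continuousWithinAt).tendsto
        rw [hswγ, abs_zero, mul_zero] at this
        exact this
    have := h2.sub h1
    rw [sub_zero] at this
    exact this
  have hlimα := hlim α (by simp) hswα hvα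
  have hlimβ := hlim β (by simp) hswβ hvβ
  -- integrability of K on Ioo α β
  have hK_meas : Measurable K := by
    rw [hKdef]
    exact (measurable_const.sub hP_meas).mul (hvm_cont.measurable.mul hsw_cont.measurable)
  have hKC : ∀ t, |K t| ≤ μ₂ * C := by
    intro t
    rw [hKdef]; dsimp only
    rw [abs_mul, abs_mul]
    have h1 : |μ₂ - P t| ≤ μ₂ := by
      rw [abs_of_nonneg (sub_nonneg.mpr (hP2 t))]
      nlinarith [hP1 t, hμ₁]
    calc |μ₂ - P t| * (|vm t| * |sw t|) ≤ μ₂ * (C * 1) := by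
          refine mul_le_mul h1 ?_ (by positivity) hμ₂.le
          exact mul_le_mul (hvmC t) (hswb t) (abs_nonneg _) hC0
      _ = μ₂ * C := by ring
  haveI hfinIoo : IsFiniteMeasure (volume.restrict (Ioo α β)) := by
    constructor
    rw [Measure.restrict_apply_univ, Real.volume_Ioo]
    exact ENNReal.ofReal_lt_top
  have hK_int : IntegrableOn K (Ioo α β) volume :=
    Integrable.mono' (integrable_const (μ₂ * C)) hK_meas.aestronglyMeasurable
      (Filter.Eventually.of_forall (fun t => by rw [Real.norm_eq_abs]; exact hKC t))
  -- sequences approaching the endpoints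
  set d : ℝ := β - α with hddef
  have hd : 0 < d := sub_pos.mpr hαβ
  set aseq : ℕ → ℝ := fun n => α + d / (n + 3) with haseq
  set bseq : ℕ → ℝ := fun n => β - d / (n + 3) with hbseq
  have hn3 : ∀ n : ℕ, (0:ℝ) < (n:ℝ) + 3 := fun n => by positivity
  have hfrac_pos : ∀ n : ℕ, 0 < d / ((n:ℝ) + 3) := fun n => div_pos hd (hn3 n)
  have hfrac_lt : ∀ n : ℕ, d / ((n:ℝ) + 3) < d := by
    intro n
    refine div_lt_self hd ?_
    have : (0:ℝ) ≤ (n:ℝ) := Nat.cast_nonneg n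
    linarith
  have hfrac_le2 : ∀ n : ℕ, d / ((n:ℝ) + 3) ≤ d / 2 := by
    intro n
    refine div_le_div_of_nonneg_left hd.le (by norm_num) ?_
    have : (0:ℝ) ≤ (n:ℝ) := Nat.cast_nonneg n
    linarith
  have ha_mem : ∀ n, aseq n ∈ Ioo α β := by
    intro n
    constructor
    · rw [haseq]; dsimp only; linarith [hfrac_pos n]
    · rw [haseq]; dsimp only; have := hfrac_lt n; rw [hddef] at this ⊢; linarith
  have hb_mem : ∀ n, bseq n ∈ Ioo α β := by
    intro n
    constructor
    · rw [hbseq]; dsimp only; have := hfrac_lt n; rw [hddef] at this ⊢; linarith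
    · rw [hbseq]; dsimp only; linarith [hfrac_pos n]
  have hab_seq : ∀ n, aseq n ≤ bseq n := by
    intro n
    rw [haseq, hbseq]; dsimp only
    have := hfrac_le2 n
    rw [hddef] at this ⊢
    linarith
  have hfrac_anti : ∀ m n : ℕ, m ≤ n → d / ((n:ℝ) + 3) ≤ d / ((m:ℝ) + 3) := by
    intro m n hmn
    refine div_le_div_of_nonneg_left hd.le (hn3 m) ?_
    have : (m:ℝ) ≤ (n:ℝ) := Nat.cast_le.mpr hmn
    linarith
  have hmono : Monotone (fun n => Ioc (aseq n) (bseq n)) := by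
    intro m n hmn
    refine Ioc_subset_Ioc ?_ ?_
    · rw [haseq]; dsimp only; linarith [hfrac_anti m n hmn]
    · rw [hbseq]; dsimp only; linarith [hfrac_anti m n hmn]
  have hunion : (⋃ n, Ioc (aseq n) (bseq n)) = Ioo α β := by
    apply Set.Subset.antisymm
    · refine Set.iUnion_subset (fun n t ht => ?_)
      exact ⟨lt_of_le_of_lt (ha_mem n).1.le ht.1,
        lt_of_le_of_lt ht.2 (hb_mem n).2⟩
    · intro t ht
      obtain ⟨n, hn⟩ := exists_nat_gt (max (d / (t - α)) (d / (β - t)))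
      refine Set.mem_iUnion.mpr ⟨n, ?_, ?_⟩
      · rw [haseq]; dsimp only
        have h1 : d / (t - α) < (n:ℝ) + 3 := by
          have := le_max_left (d / (t - α)) (d / (β - t)); linarith
        have h2 : d / ((n:ℝ) + 3) < t - α := by
          rw [div_lt_iff₀ (hn3 n)]
          calc d < ((n:ℝ) + 3) * (t - α) := (div_lt_iff₀ (sub_pos.mpr ht.1)).mp h1
            _ = (t - α) * ((n:ℝ) + 3) := mul_comm _ _
        linarith
      · rw [hbseq]; dsimp only
        have h1 : d / (β - t) < (n:ℝ) + 3 := by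
          have := le_max_right (d / (t - α)) (d / (β - t)); linarith
        have h2 : d / ((n:ℝ) + 3) < β - t := by
          rw [div_lt_iff₀ (hn3 n)]
          calc d < ((n:ℝ) + 3) * (β - t) := (div_lt_iff₀ (sub_pos.mpr ht.2)).mp h1
            _ = (β - t) * ((n:ℝ) + 3) := mul_comm _ _
        linarith
  have htend_int : Filter.Tendsto (fun n => ∫ t in Ioc (aseq n) (bseq n), K t)
      Filter.atTop (nhds (∫ t in Ioo α β, K t)) := by
    have := tendsto_setIntegral_of_monotone (fun n => measurableSet_Ioc) hmono
      (hunion ▸ hK_int)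
    rwa [hunion] at this
  have heq : ∀ n, ∫ t in Ioc (aseq n) (bseq n), K t = WF (bseq n) - WF (aseq n) := by
    intro n
    rw [← intervalIntegral.integral_of_le (hab_seq n)]
    exact (stepC _ (ha_mem n) _ (hb_mem n) (hab_seq n)).symm
  have htendn3 : Filter.Tendsto (fun n : ℕ => d / ((n:ℝ) + 3)) Filter.atTop (nhds 0) := by
    refine Filter.Tendsto.div_atTop tendsto_const_nhds ?_
    exact Filter.tendsto_atTop_add_const_right _ 3 tendsto_natCast_atTop_atTop
  have haten : Filter.Tendsto aseq Filter.atTop (nhdsWithin α (Ioo α β)) := by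
    refine tendsto_nhdsWithin_iff.mpr ⟨?_, Filter.Eventually.of_forall ha_mem⟩
    have := Filter.Tendsto.const_add α htendn3
    rw [add_zero] at this
    exact this
  have hbten : Filter.Tendsto bseq Filter.atTop (nhdsWithin β (Ioo α β)) := by
    refine tendsto_nhdsWithin_iff.mpr ⟨?_, Filter.Eventually.of_forall hb_mem⟩
    have := Filter.Tendsto.const_sub β htendn3
    rw [sub_zero] at this
    exact this
  have htendWF : Filter.Tendsto (fun n => WF (bseq n) - WF (aseq n)) Filter.atTop (nhds 0) := by
    have := (hlimβ.comp hbten).sub (hlimα.comp haten)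
    rw [sub_zero] at this
    exact this
  have hintzero : ∫ t in Ioo α β, K t = 0 := by
    refine tendsto_nhds_unique htend_int ?_
    refine htendWF.congr (fun n => (heq n).symm)
  have hK_nonneg : 0 ≤ᵐ[volume.restrict (Ioo α β)] K := by
    filter_upwards [ae_restrict_mem measurableSet_Ioo] with t ht
    rw [hKdef]; dsimp only
    have h1 : vm t = v t := hvm_eq t (Ioo_subset_Icc_self ht)
    refine mul_nonneg (sub_nonneg.mpr (hP2 t)) ?_
    rw [h1]
    exact (mul_pos (hv_pos t ht) (hsw_pos t ht)).le
  have hKz : K =ᵐ[volume.restrict (Ioo α β)] 0 :=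
    (integral_eq_zero_iff_of_nonneg_ae hK_nonneg hK_int).mp hintzero
  constructor
  · -- Part 1 : p = μ₂ a.e.
    filter_upwards [hKz, hp_bounds, ae_restrict_mem measurableSet_Ioo] with t h0 hpb ht
    have hPt : P t = p t := by
      rw [hPdef]; dsimp only; rw [min_eq_left hpb.2, max_eq_right hpb.1]
    have h1 : vm t = v t := hvm_eq t (Ioo_subset_Icc_self ht)
    have h2 : (μ₂ - P t) * (vm t * sw t) = 0 := h0
    rw [h1] at h2
    have h3 : 0 < v t * sw t := mul_pos (hv_pos t ht) (hsw_pos t ht)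
    rcases mul_eq_zero.mp h2 with h | h
    · rw [hPt] at h; linarith
    · exact absurd h (ne_of_gt h3)
  · -- Part 2 : v = c sin
    have hWF0 : ∀ b ∈ Ioo α β, WF b = 0 := by
      intro b hb
      haveI : (nhdsWithin α (Ioo α β)).NeBot := by
        refine mem_closure_iff_nhdsWithin_neBot.mp ?_
        rw [closure_Ioo hαβ.ne]
        exact ⟨le_refl _, hαβ.le⟩
      have hzero : ∀ x ∈ Ioo α β, ∀ y ∈ Ioo α β, x ≤ y → WF y = WF x := by
        intro x hx y hy hxy
        have hc := stepC x hx y hy hxy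
        have hz : ∫ u in x..y, K u = 0 := by
          rw [intervalIntegral.integral_of_le hxy]
          have hKz' : ∀ᵐ u ∂(volume.restrict (Ioc x y)), K u = (0:ℝ) := by
            refine ae_restrict_of_ae_restrict_of_subset ?_ hKz
            intro u hu
            exact ⟨lt_trans hx.1 hu.1, lt_of_le_of_lt hu.2 hy.2⟩
          calc ∫ u in Ioc x y, K u = ∫ _ in Ioc x y, (0:ℝ) := integral_congr_ae hKz'
            _ = 0 := integral_zero _ _
        rw [hz] at hc
        linarith
      have hconst : ∀ t ∈ Ioo α β, WF t = WF b := by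
        intro t ht
        rcases le_total t b with h | h
        · linarith [hzero t ht b hb h]
        · linarith [hzero b hb t ht h]
      have h1 : Filter.Tendsto WF (nhdsWithin α (Ioo α β)) (nhds (WF b)) := by
        have hcn : Filter.Tendsto (fun _ : ℝ => WF b) (nhdsWithin α (Ioo α β))
            (nhds (WF b)) := tendsto_const_nhds
        refine Filter.Tendsto.congr' ?_ hcn
        filter_upwards [self_mem_nhdsWithin] with t ht
        exact (hconst t ht).symm
      exact tendsto_nhds_unique h1 hlimα
    set c : ℝ := v t₀ / sw t₀ with hcdef
    have hc : 0 < c := div_pos (hv_pos t₀ ht₀) (hsw_pos t₀ ht₀)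
    have hratio : ∀ t ∈ Ioo α β, v t = c * sw t := by
      intro t ht
      have hdiv : ∀ u ∈ Ioo α β, HasDerivAt (fun s => v s / sw s) 0 u := by
        intro u hu
        have h := (hv_deriv u hu).div (hsw u) (ne_of_gt (hsw_pos u hu))
        have h0 : v' u * sw u - v u * swd u = 0 := hWF0 u hu
        rw [show (v' u * sw u - v u * swd u) / sw u ^ 2 = 0 by rw [h0]; ring] at h
        exact h
      have hftc := intervalIntegral.integral_eq_sub_of_hasDerivAt
        (f := fun s => v s / sw s) (f' := fun _ => (0:ℝ))
        (fun u hu => hdiv u (husub ht₀ ht hu)) (intervalIntegrable_const)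
      rw [intervalIntegral.integral_const, smul_zero] at hftc
      have h2 : v t / sw t = c := by
        rw [hcdef]
        linarith [hftc]
      rw [div_eq_iff (ne_of_gt (hsw_pos t ht))] at h2
      linarith [h2]
    refine ⟨c, hc, fun t ht => ?_⟩
    rcases eq_or_lt_of_le ht.1 with h | h
    · rw [← h, hvα]
      rw [show σ * (α - α) = 0 by ring]
      simp
    · rcases eq_or_lt_of_le ht.2 with h2 | h2
      · rw [h2, hvβ, hπ, Real.sin_pi, mul_zero]
      · have := hratio t ⟨h, h2⟩
        rw [this, hswdef]
end
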